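/- arXiv:2308.14993 — 10 statements merged into one kernel-verified Lean document; each statement's English description precedes it below -/
import Mathlib

section
/- Let p ∈ [0,1), let 1 ≤ k ≤ n be integers, let x ∈ {0,1}^n and w ∈ {0,1}^k. Then for every z ∈ ℂ: Σ_{ℓ=0}^{n−1} K_{w,x}[ℓ]·z^ℓ = Σ_{j=0}^{n−k} 1[x[j:j+k−1]=w]·(p+(1−p)z)^j. That is, the k-mer generating polynomial, whose coefficients are the k-mer density map entries, equals the subword-indicator polynomial evaluated at p+(1−p)z. -/
open Finset

/-- Indicator (as a Prop) that the `k`-mer `w` occurs in `x` starting at position `j`,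
i.e. `x_{j+t} = w_t` for all in-range `t`. -/
def occAt {n k : ℕ} (x : Fin n → Bool) (w : Fin k → Bool) (j : ℕ) : Prop :=
  ∀ t : Fin k, ∀ h : j + t.1 < n, x ⟨j + t.1, h⟩ = w t

open Classical in
/-- The real-valued indicator `1[x[j : j+k-1] = w]`. -/
noncomputable def indAt {n k : ℕ} (x : Fin n → Bool) (w : Fin k → Bool) (j : ℕ) : ℝ :=
  if occAt x w j then 1 else 0

/-- The `k`-mer density map entry
`K_{w,x}[i] = ∑_{j=0}^{n-k} C(j,i) p^{j-i} (1-p)^i 1[x[j:j+k-1]=w]`. -/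
noncomputable def Kmap (p : ℝ) {n k : ℕ} (x : Fin n → Bool) (w : Fin k → Bool) (i : ℕ) : ℝ :=
  ∑ j ∈ Finset.range (n - k + 1),
    (j.choose i : ℝ) * p ^ (j - i) * (1 - p) ^ i * indAt x w j

/-- The ℓ₁ distance between the `k`-mer density maps of `x` and `y`. -/
noncomputable def kmerL1 (p : ℝ) {n : ℕ} (k : ℕ) (x y : Fin n → Bool) : ℝ :=
  ∑ w : Fin k → Bool, ∑ i ∈ Finset.range n, |Kmap p x w i - Kmap p y w i|

/-- The `k`-mer generating polynomial
`P_{w,x}(z) = ∑_{j=0}^{n-k} 1[x[j:j+k-1]=w] (p + (1-p) z)^j`. -/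
noncomputable def Pgen (p : ℝ) {n k : ℕ} (x : Fin n → Bool) (w : Fin k → Bool) (z : ℂ) : ℂ :=
  ∑ j ∈ Finset.range (n - k + 1),
    (indAt x w j : ℝ) * ((p : ℂ) + (1 - (p : ℂ)) * z) ^ j

/-- The power series with coefficients `K_{w,x}[ℓ]` equals the subword-indicator
polynomial evaluated at `p + (1-p)z`. -/
theorem stmt_3 (p : ℝ) (hp0 : 0 ≤ p) (hp1 : p < 1) (n k : ℕ) (hk : 1 ≤ k) (hkn : k ≤ n)
    (x : Fin n → Bool) (w : Fin k → Bool) (z : ℂ) :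
    ∑ l ∈ Finset.range n, (Kmap p x w l : ℂ) * z ^ l = Pgen p x w z := by
  unfold Kmap Pgen
  push_cast
  simp only [Finset.sum_mul]
  rw [Finset.sum_comm]
  refine Finset.sum_congr rfl fun j hj => ?_
  rw [Finset.mem_range] at hj
  have hjn : j + 1 ≤ n := by omega
  rw [add_comm (p : ℂ) _, add_pow]
  rw [← Finset.sum_range_add_sum_Ico _ hjn, Finset.mul_sum]
  have h0 : ∑ l ∈ Finset.Ico (j+1) n,
      (↑(j.choose l) * (p:ℂ) ^ (j - l) * (1 - ↑p) ^ l * ↑(indAt x w j)) * z ^ l = 0 := by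
    refine Finset.sum_eq_zero fun l hl => ?_
    rw [Finset.mem_Ico] at hl
    rw [Nat.choose_eq_zero_of_lt (by omega)]
    push_cast; ring
  rw [h0, add_zero]
  refine Finset.sum_congr rfl fun l hl => ?_
  rw [mul_pow]; ring
end

section
/- Fix a deletion probability p ∈ [0,1). There exist a universal constant α > 0 and an integer L₀ such that: for every integer r with L := r³ ≥ L₀ and every integer k with 1 ≤ k ≤ r, there exist distinct strings x, y ∈ {0,1}^L, both satisfying x_i = y_i = 0 for all 0 ≤ i ≤ r−2 (i.e., both start with a run of 0s of length L^{1/3}−1), such that for every k-mer w ∈ {0,1}^k and every real θ with |θ| ≤ α·L^{−2/3}: |P_{w,x}(e^{iθ}) − P_{w,y}(e^{iθ})| ≤ 2^{−L^{1/3}/20}. -/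
open Finset

/-- The indicator string with `1`s exactly at positions `r + k*i`, `i ∈ S`. -/
def xstr (r k : ℕ) (S : Finset ℕ) : Fin (r^3) → Bool :=
  fun v => decide (∃ i ∈ S, v.1 = r + k*i)

lemma term_exp (x : ℝ) (hx : 0 ≤ x) (m : ℕ) : x ^ m ≤ m.factorial * Real.exp x := by
  have h := Real.sum_le_exp_of_nonneg hx (m+1)
  have h2 : x ^ m / m.factorial ≤ Real.exp x := by
    refine le_trans (Finset.single_le_sum (f := fun i => x ^ i / i.factorial) ?_ (Finset.self_mem_range_succ m)) h
    intro i _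
    positivity
  have hm : (0:ℝ) < m.factorial := by positivity
  calc x ^ m = (x ^ m / m.factorial) * m.factorial := by field_simp
    _ ≤ Real.exp x * m.factorial := by
        apply mul_le_mul_of_nonneg_right h2 hm.le
    _ = m.factorial * Real.exp x := by ring

lemma taylor_bound (z : ℂ) (hz : ‖z‖ ≤ 1) (d j : ℕ) :
    ‖z ^ j - ∑ m ∈ Finset.range d, (j.choose m : ℂ) * (z - 1) ^ m‖ ≤
      (j.choose d : ℝ) * ‖z - 1‖ ^ d := by
  have hz0 : 0 ≤ ‖z - 1‖ := norm_nonneg _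
  induction j with
  | zero =>
      cases d with
      | zero => simp
      | succ D =>
          have hs : ∑ m ∈ Finset.range (D+1), ((Nat.choose 0 m : ℂ)) * (z - 1) ^ m = 1 := by
            rw [Finset.sum_eq_single 0]
            · simp
            · intro b _ hb
              rw [Nat.choose_eq_zero_of_lt (Nat.pos_of_ne_zero hb)]
              simp
            · simp
          rw [hs]
          simp [Nat.choose_eq_zero_of_lt (Nat.succ_pos D)]
  | succ j ih =>
      cases d with
      | zero =>
          simp only [Finset.range_zero, Finset.sum_empty, sub_zero, Nat.choose_zero_right,
            Nat.cast_one, pow_zero, mul_one]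
          calc ‖z ^ (j+1)‖ = ‖z‖ ^ (j+1) := by rw [norm_pow]
            _ ≤ 1 := pow_le_one₀ (norm_nonneg z) hz
      | succ D =>
          set u := z - 1 with hu
          have key : z ^ (j+1) - ∑ m ∈ Finset.range (D+1), ((j+1).choose m : ℂ) * u ^ m
              = z * (z ^ j - ∑ m ∈ Finset.range (D+1), (j.choose m : ℂ) * u ^ m)
                + (j.choose D : ℂ) * u ^ (D+1) := by
            have h1 : z * (∑ m ∈ Finset.range (D+1), (j.choose m : ℂ) * u ^ m)
                = (∑ m ∈ Finset.range (D+1), (j.choose m : ℂ) * u ^ m)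
                  + ∑ m ∈ Finset.range (D+1), (j.choose m : ℂ) * u ^ (m+1) := by
              have hz1 : z = 1 + u := by rw [hu]; ring
              rw [hz1, add_mul, one_mul, Finset.mul_sum]
              congr 1
              apply Finset.sum_congr rfl
              intro m _
              ring
            have h2 : ∑ m ∈ Finset.range (D+1), ((j+1).choose m : ℂ) * u ^ m
                = 1 + ∑ m ∈ Finset.range D, ((j.choose m : ℂ) + (j.choose (m+1) : ℂ)) * u ^ (m+1) := by
              rw [Finset.sum_range_succ' (fun m => ((j+1).choose m : ℂ) * u ^ m) D]
              simp only [Nat.choose_succ_succ j, Nat.cast_add, Nat.choose_zero_right,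
                Nat.cast_one, pow_zero, mul_one]
              ring
            have h3 : ∑ m ∈ Finset.range (D+1), (j.choose m : ℂ) * u ^ m
                = 1 + ∑ m ∈ Finset.range D, (j.choose (m+1) : ℂ) * u ^ (m+1) := by
              rw [Finset.sum_range_succ' (fun m => (j.choose m : ℂ) * u ^ m) D]
              simp only [Nat.choose_zero_right, Nat.cast_one, pow_zero, mul_one]
              ring
            have h4 : ∑ m ∈ Finset.range (D+1), (j.choose m : ℂ) * u ^ (m+1)
                = (∑ m ∈ Finset.range D, (j.choose m : ℂ) * u ^ (m+1)) + (j.choose D : ℂ) * u ^ (D+1) := by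
              rw [Finset.sum_range_succ]
            rw [pow_succ]
            rw [mul_sub, h1, h2, h3, h4]
            simp only [Finset.sum_add_distrib, add_mul]
            ring
          rw [key]
          calc ‖z * (z ^ j - ∑ m ∈ Finset.range (D+1), (j.choose m : ℂ) * u ^ m)
                + (j.choose D : ℂ) * u ^ (D+1)‖
              ≤ ‖z‖ * ‖z ^ j - ∑ m ∈ Finset.range (D+1), (j.choose m : ℂ) * u ^ m‖
                + (j.choose D : ℝ) * ‖u‖ ^ (D+1) := by
                refine le_trans (norm_add_le _ _) ?_
                rw [norm_mul, norm_mul, norm_pow]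
                simp
            _ ≤ (j.choose (D+1) : ℝ) * ‖u‖ ^ (D+1) + (j.choose D : ℝ) * ‖u‖ ^ (D+1) := by
                have hmain : ‖z‖ * ‖z ^ j - ∑ m ∈ Finset.range (D+1), (j.choose m : ℂ) * u ^ m‖
                    ≤ (j.choose (D+1) : ℝ) * ‖u‖ ^ (D+1) := by
                  calc ‖z‖ * ‖z ^ j - ∑ m ∈ Finset.range (D+1), (j.choose m : ℂ) * u ^ m‖
                      ≤ 1 * ((j.choose (D+1) : ℝ) * ‖u‖ ^ (D+1)) :=
                        mul_le_mul hz ih (norm_nonneg _) zero_le_one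
                    _ = (j.choose (D+1) : ℝ) * ‖u‖ ^ (D+1) := one_mul _
                linarith
            _ = ((j+1).choose (D+1) : ℝ) * ‖u‖ ^ (D+1) := by
                rw [Nat.choose_succ_succ' ]
                push_cast
                ring

lemma chat_bound (r k : ℕ) (hr : 1000000 ≤ r) (hkr : k ≤ r)
    (S : Finset ℕ) (hS : S ⊆ Finset.range (r^2-2)) (m : ℕ) :
    (∑ i ∈ S, ((k*i).choose m : ℝ)) * (1/(100*(r:ℝ)^2)) ^ m
      ≤ (r:ℝ)^2 * Real.exp ((r:ℝ)/100) := by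
  have hr0 : 0 < r := by omega
  have hR0 : (0:ℝ) < (r:ℝ) := by exact_mod_cast hr0
  have hu₀ : (0:ℝ) < 1/(100*(r:ℝ)^2) := by positivity
  have hsum : (∑ i ∈ S, ((k*i).choose m : ℝ)) ≤ (r:ℝ)^2 * ((r^3).choose m : ℝ) := by
    have h1 : ∀ i ∈ S, ((k*i).choose m : ℝ) ≤ ((r^3).choose m : ℝ) := by
      intro i hi
      have hi' : i < r^2 - 2 := Finset.mem_range.mp (hS hi)
      have : k * i ≤ r^3 := by
        calc k * i ≤ r * (r^2) := Nat.mul_le_mul hkr (by omega)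
          _ = r^3 := by ring
      exact_mod_cast Nat.choose_le_choose m this
    calc (∑ i ∈ S, ((k*i).choose m : ℝ)) ≤ ∑ i ∈ S, ((r^3).choose m : ℝ) :=
          Finset.sum_le_sum h1
      _ = (S.card : ℝ) * ((r^3).choose m : ℝ) := by rw [Finset.sum_const, nsmul_eq_mul]
      _ ≤ (r:ℝ)^2 * ((r^3).choose m : ℝ) := by
          have hc : S.card ≤ r^2 := by
            have h := Finset.card_le_card hS
            rw [Finset.card_range] at h
            omega
          have : (S.card : ℝ) ≤ (r:ℝ)^2 := by exact_mod_cast hc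
          exact mul_le_mul_of_nonneg_right this (Nat.cast_nonneg _)
  have hchoose : ((r^3).choose m : ℝ) * (1/(100*(r:ℝ)^2)) ^ m ≤ Real.exp ((r:ℝ)/100) := by
    have hd : ((r^3).choose m : ℝ) * (m.factorial : ℝ) ≤ ((r:ℝ)^3) ^ m := by
      have := Nat.descFactorial_le_pow (r^3) m
      rw [Nat.descFactorial_eq_factorial_mul_choose] at this
      have : ((m.factorial * (r^3).choose m : ℕ) : ℝ) ≤ (((r^3)^m : ℕ) : ℝ) := by exact_mod_cast this
      push_cast at this
      linarith
    have hfac : (0:ℝ) < (m.factorial : ℝ) := by exact_mod_cast m.factorial_pos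
    have hx : ((r:ℝ)^3) ^ m * (1/(100*(r:ℝ)^2)) ^ m = ((r:ℝ)/100) ^ m := by
      rw [← mul_pow]
      congr 1
      field_simp
    have hterm : ((r:ℝ)/100) ^ m ≤ (m.factorial : ℝ) * Real.exp ((r:ℝ)/100) :=
      term_exp _ (by positivity) m
    have h2 : ((r^3).choose m : ℝ) * (1/(100*(r:ℝ)^2)) ^ m * (m.factorial : ℝ)
        ≤ (m.factorial : ℝ) * Real.exp ((r:ℝ)/100) := by
      calc ((r^3).choose m : ℝ) * (1/(100*(r:ℝ)^2)) ^ m * (m.factorial : ℝ)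
          = (((r^3).choose m : ℝ) * (m.factorial : ℝ)) * (1/(100*(r:ℝ)^2)) ^ m := by ring
        _ ≤ ((r:ℝ)^3) ^ m * (1/(100*(r:ℝ)^2)) ^ m := by
            exact mul_le_mul_of_nonneg_right hd (by positivity)
        _ = ((r:ℝ)/100) ^ m := hx
        _ ≤ (m.factorial : ℝ) * Real.exp ((r:ℝ)/100) := hterm
    have := (mul_le_mul_iff_of_pos_right hfac).mp (by linarith : ((r^3).choose m : ℝ) * (1/(100*(r:ℝ)^2)) ^ m * (m.factorial:ℝ) ≤ Real.exp ((r:ℝ)/100) * (m.factorial:ℝ))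
    linarith [this]
  calc (∑ i ∈ S, ((k*i).choose m : ℝ)) * (1/(100*(r:ℝ)^2)) ^ m
      ≤ ((r:ℝ)^2 * ((r^3).choose m : ℝ)) * (1/(100*(r:ℝ)^2)) ^ m := by
        exact mul_le_mul_of_nonneg_right hsum (by positivity)
    _ = (r:ℝ)^2 * (((r^3).choose m : ℝ) * (1/(100*(r:ℝ)^2)) ^ m) := by ring
    _ ≤ (r:ℝ)^2 * Real.exp ((r:ℝ)/100) := by
        exact mul_le_mul_of_nonneg_left hchoose (by positivity)

lemma abs_sub_lt_one_of_floor_eq (a b : ℝ) (h : ⌊a⌋ = ⌊b⌋) : |a - b| < 1 := by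
  have h1 := Int.lt_floor_add_one a
  have h2 := Int.floor_le a
  have h3 := Int.lt_floor_add_one b
  have h4 := Int.floor_le b
  have h5 : (⌊a⌋ : ℝ) = (⌊b⌋ : ℝ) := by rw [h]
  rw [abs_sub_lt_iff]
  constructor <;> linarith

lemma sq_lt_exp (r : ℕ) (hr : 1000000 ≤ r) : ((r:ℝ))^2 < Real.exp ((r:ℝ)/30) := by
  have hR : (1000000:ℝ) ≤ (r:ℝ) := by exact_mod_cast hr
  have h := term_exp ((r:ℝ)/30) (by positivity) 3
  have hfac : ((3:ℕ).factorial : ℝ) = 6 := by norm_num [Nat.factorial]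
  rw [hfac] at h
  nlinarith [Real.exp_pos ((r:ℝ)/30)]

lemma num_count (r : ℕ) (hr : 1000000 ≤ r) :
    (r:ℝ)^2 * Real.exp ((r:ℝ)/100) * 2^(r/4+1) < 2^(r/3) := by
  have hR : (1000000:ℝ) ≤ (r:ℝ) := by exact_mod_cast hr
  set q := r/4+1 with hq
  set E := r/3 with hE
  have hqE : q ≤ E := by omega
  set s := E - q with hs
  have hseq : E = q + s := by omega
  have h13 : r ≤ 13 * s := by omega
  have h2E : (2:ℝ)^E = 2^q * 2^s := by rw [hseq, pow_add]
  rw [h2E]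
  have h2q : (0:ℝ) < 2^q := by positivity
  have key : (r:ℝ)^2 * Real.exp ((r:ℝ)/100) < 2^s := by
    have hexp : (2:ℝ)^s = Real.exp (Real.log 2 * s) := by
      rw [← Real.rpow_natCast 2 s, Real.rpow_def_of_pos (by norm_num)]
    have hlog2 : (0.6931471803:ℝ) < Real.log 2 := Real.log_two_gt_d9
    have hsR : (r:ℝ) ≤ 13 * (s:ℝ) := by exact_mod_cast h13
    have h1 : (r:ℝ)^2 * Real.exp ((r:ℝ)/100) < Real.exp ((r:ℝ)/30) * Real.exp ((r:ℝ)/100) := by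
      have := sq_lt_exp r hr
      nlinarith [Real.exp_pos ((r:ℝ)/100)]
    have h2 : Real.exp ((r:ℝ)/30) * Real.exp ((r:ℝ)/100) = Real.exp ((r:ℝ)*13/300) := by
      rw [← Real.exp_add]; ring_nf
    have h3 : Real.exp ((r:ℝ)*13/300) ≤ Real.exp (Real.log 2 * s) := by
      apply Real.exp_le_exp.mpr
      nlinarith
    rw [hexp]
    calc (r:ℝ)^2 * Real.exp ((r:ℝ)/100) < Real.exp ((r:ℝ)/30) * Real.exp ((r:ℝ)/100) := h1
      _ = Real.exp ((r:ℝ)*13/300) := h2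
      _ ≤ Real.exp (Real.log 2 * s) := h3
  calc (r:ℝ)^2 * Real.exp ((r:ℝ)/100) * 2^q < 2^s * 2^q := by
        exact (mul_lt_mul_iff_of_pos_right h2q).mpr key
    _ = 2^q * 2^s := by ring

lemma exists_pair (r k : ℕ) (hr : 1000000 ≤ r) (hkr : k ≤ r) :
    ∃ Sx Sy : Finset ℕ, Sx ⊆ Finset.range (r^2 - 2) ∧ Sy ⊆ Finset.range (r^2 - 2) ∧ Sx ≠ Sy ∧
      ∀ m, m < r →
        |(∑ i ∈ Sx, ((k*i).choose m : ℝ)) - ∑ i ∈ Sy, ((k*i).choose m : ℝ)|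
            * (1/(100*(r:ℝ)^2)) ^ m ≤ ((2:ℝ)^(r/4+1))⁻¹ := by
  classical
  have hr0 : 0 < r := by omega
  have hR0 : (0:ℝ) < (r:ℝ) := by exact_mod_cast hr0
  set M := r^2 - 2 with hM
  set q := r/4 + 1 with hq
  set E := r/3 with hE
  set u₀ : ℝ := 1/(100*(r:ℝ)^2) with hu₀def
  have hu₀ : (0:ℝ) < u₀ := by rw [hu₀def]; positivity
  set f : Finset ℕ → (Fin r → ℤ) :=
    fun S m => ⌊(∑ i ∈ S, ((k*i).choose m.1 : ℝ)) * u₀ ^ m.1 * 2^q⌋ with hf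
  set T : Finset (Fin r → ℤ) := Fintype.piFinset (fun _ : Fin r => Finset.Icc (0:ℤ) (2^E - 1)) with hT
  have hmaps : ∀ S ∈ (Finset.range M).powerset, f S ∈ T := by
    intro S hS
    rw [hT, Fintype.mem_piFinset]
    intro m
    simp only [hf]
    have hSsub : S ⊆ Finset.range M := Finset.mem_powerset.mp hS
    have hnn : (0:ℝ) ≤ (∑ i ∈ S, ((k*i).choose m.1 : ℝ)) * u₀ ^ m.1 * 2^q := by
      have h0 : (0:ℝ) ≤ ∑ i ∈ S, ((k*i).choose m.1 : ℝ) :=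
        Finset.sum_nonneg (fun i _ => Nat.cast_nonneg _)
      have := hu₀.le
      positivity
    have hub : (∑ i ∈ S, ((k*i).choose m.1 : ℝ)) * u₀ ^ m.1 * 2^q < (((2:ℤ)^E : ℤ) : ℝ) := by
      have h1 : (∑ i ∈ S, ((k*i).choose m.1 : ℝ)) * u₀ ^ m.1 ≤ (r:ℝ)^2 * Real.exp ((r:ℝ)/100) :=
        chat_bound r k hr hkr S hSsub m.1
      have h2 : (r:ℝ)^2 * Real.exp ((r:ℝ)/100) * 2^q < 2^E := num_count r hr
      have h3 : (∑ i ∈ S, ((k*i).choose m.1 : ℝ)) * u₀ ^ m.1 * 2^q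
          ≤ (r:ℝ)^2 * Real.exp ((r:ℝ)/100) * 2^q := by
        have h2q : (0:ℝ) ≤ (2:ℝ)^q := by positivity
        exact mul_le_mul_of_nonneg_right h1 h2q
      have h4 : (((2:ℤ)^E : ℤ) : ℝ) = (2:ℝ)^E := by push_cast; ring
      rw [h4]
      linarith
    rw [Finset.mem_Icc]
    refine ⟨Int.le_floor.mpr (by simpa using hnn), ?_⟩
    have hlt : ⌊(∑ i ∈ S, ((k*i).choose m.1 : ℝ)) * u₀ ^ m.1 * 2^q⌋ < (2:ℤ)^E :=
      Int.floor_lt.mpr hub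
    omega
  have hcard : T.card < ((Finset.range M).powerset).card := by
    rw [Finset.card_powerset, Finset.card_range]
    rw [hT, Fintype.card_piFinset]
    have hIcc : (Finset.Icc (0:ℤ) (2^E - 1)).card = 2^E := by
      rw [Int.card_Icc]
      norm_num
      rw [show ((2:ℤ)^E) = ((2^E : ℕ) : ℤ) by push_cast; ring, Int.toNat_natCast]
    rw [hIcc]
    rw [Finset.prod_const, Finset.card_univ, Fintype.card_fin, ← pow_mul]
    have h3E : 3 * E ≤ r := by omega
    have hEr : 3 * (E * r) ≤ r * r := by
      calc 3 * (E * r) = (3 * E) * r := by ring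
        _ ≤ r * r := Nat.mul_le_mul_right r h3E
    have hrr : 1000000 * 1000000 ≤ r * r := Nat.mul_le_mul hr hr
    have hM' : M = r * r - 2 := by rw [hM]; ring_nf
    apply Nat.pow_lt_pow_right (by norm_num : 1 < 2)
    omega
  obtain ⟨Sx, hSx, Sy, hSy, hne, hfe⟩ :=
    Finset.exists_ne_map_eq_of_card_lt_of_maps_to hcard hmaps
  refine ⟨Sx, Sy, Finset.mem_powerset.mp hSx, Finset.mem_powerset.mp hSy, hne, ?_⟩
  intro m hm
  have heq : ⌊(∑ i ∈ Sx, ((k*i).choose m : ℝ)) * u₀ ^ m * 2^q⌋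
      = ⌊(∑ i ∈ Sy, ((k*i).choose m : ℝ)) * u₀ ^ m * 2^q⌋ := by
    have := congrFun hfe (⟨m, hm⟩ : Fin r)
    simpa [hf] using this
  have habs := abs_sub_lt_one_of_floor_eq _ _ heq
  have h2q : (0:ℝ) < 2^q := by positivity
  have hfin : |(∑ i ∈ Sx, ((k*i).choose m : ℝ)) - ∑ i ∈ Sy, ((k*i).choose m : ℝ)| * u₀ ^ m * 2^q
      = |(∑ i ∈ Sx, ((k*i).choose m : ℝ)) * u₀ ^ m * 2^q
          - (∑ i ∈ Sy, ((k*i).choose m : ℝ)) * u₀ ^ m * 2^q| := by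
    rw [← sub_mul, ← sub_mul, abs_mul, abs_mul]
    rw [abs_of_nonneg (le_of_lt h2q), abs_of_nonneg (pow_nonneg (le_of_lt hu₀) m)]
  have hle : |(∑ i ∈ Sx, ((k*i).choose m : ℝ)) - ∑ i ∈ Sy, ((k*i).choose m : ℝ)| * u₀ ^ m * 2^q
      ≤ 1 := by rw [hfin]; exact le_of_lt habs
  rw [inv_eq_one_div, le_div_iff₀ h2q]
  linarith

section Constr

variable {r k : ℕ}

/-- uniqueness of window decomposition -/
lemma uniq_window {a a' i i' j : ℕ} (ha : a < k) (ha' : a' < k)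
    (e1 : j + a = r + k*i) (e2 : j + a' = r + k*i') : a = a' ∧ i = i' := by
  have hlin : a + (r + k*i') = a' + (r + k*i) := by omega
  have h1 : k*i < k*(i'+1) := by
    have : k*(i'+1) = k*i' + k := by ring
    omega
  have h2 : k*i' < k*(i+1) := by
    have : k*(i+1) = k*i + k := by ring
    omega
  have hi1 : i < i'+1 := Nat.lt_of_mul_lt_mul_left h1
  have hi2 : i' < i+1 := Nat.lt_of_mul_lt_mul_left h2
  have : i = i' := by omega
  subst this
  exact ⟨by omega, rfl⟩

lemma pos_range (hr : 1000000 ≤ r) (hkr : k ≤ r)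
    {S : Finset ℕ} (hS : S ⊆ Finset.range (r^2 - 2)) {i : ℕ} (hi : i ∈ S) :
    r + k*i ≤ r^3 - 2*r := by
  have hi' : i < r^2 - 2 := Finset.mem_range.mp (hS hi)
  have h1 : k * i ≤ r * (r^2 - 3) := Nat.mul_le_mul hkr (by omega)
  have h2 : r * (r^2 - 3) = r*r^2 - r*3 := Nat.mul_sub r (r^2) 3
  have h3 : r^3 = r*r^2 := by ring
  have h4 : r*3 ≤ r*r^2 := Nat.mul_le_mul_left r (by nlinarith)
  omega

lemma xstr_true {S : Finset ℕ} {v : Fin (r^3)} :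
    xstr r k S v = true ↔ ∃ i ∈ S, v.1 = r + k*i := by
  simp [xstr]

lemma xstr_false {S : Finset ℕ} {v : Fin (r^3)} :
    xstr r k S v = false ↔ ¬ ∃ i ∈ S, v.1 = r + k*i := by
  simp [xstr]

lemma occ_single (hkr : k ≤ r) {S : Finset ℕ} {w : Fin k → Bool} (t : Fin k)
    (hwt : w t = true) (hw' : ∀ t', t' ≠ t → w t' = false)
    {j : ℕ} (hj : j ≤ r^3 - k) :
    occAt (xstr r k S) w j ↔ ∃ i ∈ S, j + t.1 = r + k*i := by
  have hkn : k ≤ r^3 := by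
    calc k ≤ r := hkr
      _ ≤ r^3 := Nat.le_self_pow (by norm_num) r
  have hlt : ∀ t' : Fin k, j + t'.1 < r^3 := by
    intro t'
    have := t'.2
    omega
  constructor
  · intro hocc
    have := hocc t (hlt t)
    rw [hwt] at this
    exact xstr_true.mp this
  · rintro ⟨i, hi, hie⟩
    intro t' h'
    by_cases hc : t' = t
    · subst hc
      rw [hwt]
      exact xstr_true.mpr ⟨i, hi, hie⟩
    · rw [hw' t' hc]
      rw [xstr_false]
      rintro ⟨i', hi', hie'⟩
      have := uniq_window (k := k) t.2 t'.2 hie hie'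
      exact hc (Fin.ext this.1.symm)

lemma occ_zero (hkr : k ≤ r) {S : Finset ℕ} {w : Fin k → Bool} (hw : ∀ t, w t = false)
    {j : ℕ} (hj : j ≤ r^3 - k) :
    occAt (xstr r k S) w j ↔ ∀ a, a < k → ¬ ∃ i ∈ S, j + a = r + k*i := by
  have hkn : k ≤ r^3 := by
    calc k ≤ r := hkr
      _ ≤ r^3 := Nat.le_self_pow (by norm_num) r
  have hlt : ∀ a, a < k → j + a < r^3 := by intro a ha; omega
  constructor
  · intro hocc a ha hex
    have h1 := hocc ⟨a, ha⟩ (hlt a ha)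
    rw [hw ⟨a, ha⟩] at h1
    rw [xstr_false] at h1
    exact h1 hex
  · intro hno t' h'
    rw [hw t', xstr_false]
    exact hno t'.1 t'.2

lemma occ_two (hkr : k ≤ r) {S : Finset ℕ} {w : Fin k → Bool} (t t' : Fin k) (hne : t ≠ t')
    (h1 : w t = true) (h2 : w t' = true) {j : ℕ} (hj : j ≤ r^3 - k) :
    ¬ occAt (xstr r k S) w j := by
  have hlt : ∀ s : Fin k, j + s.1 < r^3 := by
    intro s
    have := s.2
    have : k ≤ r^3 := by
      calc k ≤ r := hkr
        _ ≤ r^3 := Nat.le_self_pow (by norm_num) r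
    omega
  intro hocc
  have g1 := hocc t (hlt t); rw [h1, xstr_true] at g1
  have g2 := hocc t' (hlt t'); rw [h2, xstr_true] at g2
  obtain ⟨i, hi, hie⟩ := g1
  obtain ⟨i', hi', hie'⟩ := g2
  exact hne (Fin.ext (uniq_window (k := k) t.2 t'.2 hie hie').1)

end Constr

open Classical in
/-- reindexing the window-indicator sum -/
lemma sum_ind {r k : ℕ} (hr : 1000000 ≤ r) (hk1 : 1 ≤ k) (hkr : k ≤ r)
    {S : Finset ℕ} (hS : S ⊆ Finset.range (r^2 - 2)) {a : ℕ} (ha : a < k) (ζ : ℂ) :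
    ∑ j ∈ Finset.range (r^3 - k + 1), (if ∃ i ∈ S, j + a = r + k*i then (1:ℂ) else 0) * ζ^j
      = ζ^(r - a) * ∑ i ∈ S, (ζ^k)^i := by
  have hsimp : ∀ j, (if ∃ i ∈ S, j + a = r + k*i then (1:ℂ) else 0) * ζ^j
      = if ∃ i ∈ S, j + a = r + k*i then ζ^j else 0 := by
    intro j
    split <;> simp
  simp_rw [hsimp]
  rw [← Finset.sum_filter]
  have hset : (Finset.range (r^3 - k + 1)).filter (fun j => ∃ i ∈ S, j + a = r + k*i)
      = S.image (fun i => (r - a) + k*i) := by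
    ext j
    simp only [Finset.mem_filter, Finset.mem_range, Finset.mem_image]
    constructor
    · rintro ⟨hjr, i, hi, hie⟩
      refine ⟨i, hi, ?_⟩
      have har : a ≤ r := le_trans (le_of_lt ha) hkr
      omega
    · rintro ⟨i, hi, rfl⟩
      have har : a ≤ r := le_trans (le_of_lt ha) hkr
      have hub := pos_range hr hkr hS hi
      have hkr3 : k ≤ r^3 := le_trans hkr (Nat.le_self_pow (by norm_num) r)
      have hrr3 : 2*r ≥ 2*k := by omega
      constructor
      · omega
      · exact ⟨i, hi, by omega⟩
  rw [hset]
  rw [Finset.sum_image (by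
    intro x _ y _ hxy
    have hk0 : 0 < k := hk1
    have hkk : k*x = k*y := by simp only at hxy; omega
    exact Nat.eq_of_mul_eq_mul_left hk0 hkk)]
  rw [Finset.mul_sum]
  apply Finset.sum_congr rfl
  intro i _
  rw [← pow_mul, ← pow_add]

open Classical in
lemma Pgen_diff_le (p : ℝ) (z : ℂ) {r k : ℕ} (hr : 1000000 ≤ r) (hk1 : 1 ≤ k) (hkr : k ≤ r)
    {Sx Sy : Finset ℕ} (hSx : Sx ⊆ Finset.range (r^2-2)) (hSy : Sy ⊆ Finset.range (r^2-2))
    (w : Fin k → Bool) (hz : ‖(p:ℂ) + (1-(p:ℂ))*z‖ ≤ 1) :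
    ‖Pgen p (xstr r k Sx) w z - Pgen p (xstr r k Sy) w z‖ ≤
      (k:ℝ) * ‖(∑ i ∈ Sx, (((p:ℂ)+(1-(p:ℂ))*z)^k)^i) - ∑ i ∈ Sy, (((p:ℂ)+(1-(p:ℂ))*z)^k)^i‖ := by
  classical
  set ζ : ℂ := (p:ℂ) + (1-(p:ℂ))*z with hζdef
  set Hx : ℂ := ∑ i ∈ Sx, (ζ^k)^i with hHx
  set Hy : ℂ := ∑ i ∈ Sy, (ζ^k)^i with hHy
  have hζ1 : ‖ζ‖ ≤ 1 := hz
  have hζp : ∀ e : ℕ, ‖ζ^e‖ ≤ 1 := fun e => by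
    rw [norm_pow]; exact pow_le_one₀ (norm_nonneg _) hζ1
  have hk0 : (0:ℝ) ≤ (k:ℝ) := Nat.cast_nonneg k
  have hΔnn : (0:ℝ) ≤ ‖Hx - Hy‖ := norm_nonneg _
  have hone : (1:ℝ) ≤ (k:ℝ) := by exact_mod_cast hk1
  -- generic single-set computation for "single-one" patterns
  have hsingle : ∀ (S : Finset ℕ), S ⊆ Finset.range (r^2-2) → ∀ (t : Fin k),
      w t = true → (∀ t', t' ≠ t → w t' = false) →
      Pgen p (xstr r k S) w z = ζ^(r - t.1) * ∑ i ∈ S, (ζ^k)^i := by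
    intro S hS t hwt hw'
    rw [Pgen, ← sum_ind hr hk1 hkr hS t.2 ζ]
    apply Finset.sum_congr rfl
    intro j hj
    have hj' : j ≤ r^3 - k := by
      have := Finset.mem_range.mp hj
      omega
    congr 1
    have hiff := occ_single hkr t hwt hw' (S := S) hj'
    have : indAt (xstr r k S) w j = if ∃ i ∈ S, j + t.1 = r + k*i then (1:ℝ) else 0 := by
      unfold indAt
      exact if_congr hiff rfl rfl
    rw [this]
    split <;> simp
  -- generic all-zero computation
  have hzero : ∀ (S : Finset ℕ), S ⊆ Finset.range (r^2-2) → (∀ t, w t = false) →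
      Pgen p (xstr r k S) w z = (∑ j ∈ Finset.range (r^3 - k + 1), ζ^j)
        - ∑ a ∈ Finset.range k, ζ^(r - a) * ∑ i ∈ S, (ζ^k)^i := by
    intro S hS hw
    have hind : ∀ j ∈ Finset.range (r^3 - k + 1),
        ((indAt (xstr r k S) w j : ℝ) : ℂ) * ζ^j
          = (1 - ∑ a ∈ Finset.range k, (if ∃ i ∈ S, j + a = r + k*i then (1:ℂ) else 0)) * ζ^j := by
      intro j hj
      have hj' : j ≤ r^3 - k := by
        have := Finset.mem_range.mp hj
        omega
      congr 1
      by_cases hex : ∃ a ∈ Finset.range k, ∃ i ∈ S, j + a = r + k*i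
      · obtain ⟨a₀, ha₀, hex₀⟩ := hex
        have hnotocc : ¬ occAt (xstr r k S) w j := by
          intro hocc
          exact ((occ_zero hkr hw hj').mp hocc) a₀ (Finset.mem_range.mp ha₀) hex₀
        have h1 : indAt (xstr r k S) w j = 0 := by
          unfold indAt
          exact if_neg hnotocc
        rw [h1]
        have h2 : ∑ a ∈ Finset.range k, (if ∃ i ∈ S, j + a = r + k*i then (1:ℂ) else 0) = 1 := by
          rw [Finset.sum_eq_single_of_mem a₀ ha₀]
          · exact if_pos hex₀
          · intro a ha hne
            apply if_neg
            rintro ⟨i, hi, hie⟩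
            obtain ⟨i₀, hi₀, hie₀⟩ := hex₀
            exact hne (uniq_window (k := k) (Finset.mem_range.mp ha) (Finset.mem_range.mp ha₀) hie hie₀).1
        rw [h2]
        norm_num
      · push_neg at hex
        have hocc : occAt (xstr r k S) w j := by
          rw [occ_zero hkr hw hj']
          intro a ha
          rintro ⟨i, hi, hie⟩
          exact hex a (Finset.mem_range.mpr ha) i hi hie
        have h1 : indAt (xstr r k S) w j = 1 := by
          unfold indAt
          exact if_pos hocc
        rw [h1]
        have h2 : ∑ a ∈ Finset.range k, (if ∃ i ∈ S, j + a = r + k*i then (1:ℂ) else 0) = 0 := by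
          apply Finset.sum_eq_zero
          intro a ha
          apply if_neg
          rintro ⟨i, hi, hie⟩
          exact hex a ha i hi hie
        rw [h2]
        norm_num
    rw [Pgen, Finset.sum_congr rfl hind]
    have hexp : ∀ j, (1 - ∑ a ∈ Finset.range k, (if ∃ i ∈ S, j + a = r + k*i then (1:ℂ) else 0)) * ζ^j
        = ζ^j - ∑ a ∈ Finset.range k, (if ∃ i ∈ S, j + a = r + k*i then (1:ℂ) else 0) * ζ^j := by
      intro j
      rw [sub_mul, one_mul, Finset.sum_mul]
    simp_rw [hexp]
    rw [Finset.sum_sub_distrib]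
    congr 1
    rw [Finset.sum_comm]
    apply Finset.sum_congr rfl
    intro a ha
    exact sum_ind hr hk1 hkr hS (Finset.mem_range.mp ha) ζ
  -- case analysis on w
  by_cases h0 : ∀ t, w t = false
  · rw [hzero Sx hSx h0, hzero Sy hSy h0]
    have hfac : ((∑ j ∈ Finset.range (r^3 - k + 1), ζ^j) - ∑ a ∈ Finset.range k, ζ^(r - a) * Hx)
        - ((∑ j ∈ Finset.range (r^3 - k + 1), ζ^j) - ∑ a ∈ Finset.range k, ζ^(r - a) * Hy)
        = ∑ a ∈ Finset.range k, ζ^(r - a) * (Hy - Hx) := by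
      have hsplit : ∑ a ∈ Finset.range k, ζ^(r - a) * (Hy - Hx)
          = (∑ a ∈ Finset.range k, ζ^(r-a) * Hy) - ∑ a ∈ Finset.range k, ζ^(r-a) * Hx := by
        rw [← Finset.sum_sub_distrib]
        exact Finset.sum_congr rfl (fun a _ => by ring)
      rw [hsplit]
      ring
    rw [hfac]
    calc ‖∑ a ∈ Finset.range k, ζ^(r - a) * (Hy - Hx)‖
        ≤ ∑ a ∈ Finset.range k, ‖ζ^(r - a) * (Hy - Hx)‖ := norm_sum_le _ _
      _ ≤ ∑ a ∈ Finset.range k, ‖Hx - Hy‖ := by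
          apply Finset.sum_le_sum
          intro a _
          rw [norm_mul, ← norm_sub_rev]
          calc ‖ζ^(r-a)‖ * ‖Hx - Hy‖ ≤ 1 * ‖Hx - Hy‖ :=
                mul_le_mul_of_nonneg_right (hζp _) hΔnn
            _ = ‖Hx - Hy‖ := one_mul _
      _ = (k:ℝ) * ‖Hx - Hy‖ := by
          rw [Finset.sum_const, Finset.card_range, nsmul_eq_mul]
  · push_neg at h0
    obtain ⟨t, ht⟩ := h0
    have hwt : w t = true := by
      cases hwtv : w t
      · exact absurd hwtv ht
      · rfl
    by_cases h1 : ∀ t', w t' = true → t' = t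
    · have hw' : ∀ t', t' ≠ t → w t' = false := by
        intro t' hne
        cases hwv : w t'
        · rfl
        · exact absurd (h1 t' hwv) hne
      rw [hsingle Sx hSx t hwt hw', hsingle Sy hSy t hwt hw']
      rw [← mul_sub]
      calc ‖ζ^(r - t.1) * (Hx - Hy)‖ = ‖ζ^(r-t.1)‖ * ‖Hx - Hy‖ := norm_mul _ _
        _ ≤ 1 * ‖Hx - Hy‖ := mul_le_mul_of_nonneg_right (hζp _) hΔnn
        _ = ‖Hx - Hy‖ := one_mul _
        _ ≤ (k:ℝ) * ‖Hx - Hy‖ := by nlinarith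
    · push_neg at h1
      obtain ⟨t', hwt', hne⟩ := h1
      have hPzero : ∀ (S : Finset ℕ), Pgen p (xstr r k S) w z = 0 := by
        intro S
        rw [Pgen]
        apply Finset.sum_eq_zero
        intro j hj
        have hj' : j ≤ r^3 - k := by
          have := Finset.mem_range.mp hj
          omega
        have : indAt (xstr r k S) w j = 0 := by
          unfold indAt
          exact if_neg (occ_two hkr t' t hne hwt' hwt hj')
        rw [this]
        norm_num
      rw [hPzero Sx, hPzero Sy]
      simp only [sub_zero, norm_zero]
      positivity

lemma Hdiff_le {r k : ℕ} (hr : 1000000 ≤ r) (hkr : k ≤ r)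
    {Sx Sy : Finset ℕ} (hSx : Sx ⊆ Finset.range (r^2-2)) (hSy : Sy ⊆ Finset.range (r^2-2))
    (ζ : ℂ) (hζ : ‖ζ‖ ≤ 1) (hu : ‖ζ - 1‖ ≤ 1/(100*(r:ℝ)^2))
    (hmom : ∀ m, m < r →
        |(∑ i ∈ Sx, ((k*i).choose m : ℝ)) - ∑ i ∈ Sy, ((k*i).choose m : ℝ)|
            * (1/(100*(r:ℝ)^2)) ^ m ≤ ((2:ℝ)^(r/4+1))⁻¹) :
    ‖(∑ i ∈ Sx, (ζ^k)^i) - ∑ i ∈ Sy, (ζ^k)^i‖ ≤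
      (r:ℝ) * ((2:ℝ)^(r/4+1))⁻¹ + 2 * (r:ℝ)^2 * ((r:ℝ)/100)^r / r.factorial := by
  have hr0 : 0 < r := by omega
  have hR0 : (0:ℝ) < (r:ℝ) := by exact_mod_cast hr0
  set u₀ : ℝ := 1/(100*(r:ℝ)^2) with hu₀def
  have hu₀pos : (0:ℝ) < u₀ := by rw [hu₀def]; positivity
  have hunn : (0:ℝ) ≤ ‖ζ - 1‖ := norm_nonneg _
  -- tail bound for a single set
  have htail : ∀ (S : Finset ℕ), S ⊆ Finset.range (r^2-2) →
      ‖(∑ i ∈ S, (ζ^k)^i) - ∑ m ∈ Finset.range r,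
          ((∑ i ∈ S, ((k*i).choose m : ℝ)) : ℂ) * (ζ-1)^m‖
        ≤ (r:ℝ)^2 * ((r:ℝ)/100)^r / r.factorial := by
    intro S hS
    have hswap : ∑ m ∈ Finset.range r, ((∑ i ∈ S, ((k*i).choose m : ℝ)) : ℂ) * (ζ-1)^m
        = ∑ i ∈ S, ∑ m ∈ Finset.range r, ((k*i).choose m : ℂ) * (ζ-1)^m := by
      rw [Finset.sum_comm]
      apply Finset.sum_congr rfl
      intro m _
      rw [Finset.sum_mul]
      push_cast
      ring
    rw [hswap, ← Finset.sum_sub_distrib]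
    calc ‖∑ i ∈ S, ((ζ^k)^i - ∑ m ∈ Finset.range r, ((k*i).choose m : ℂ) * (ζ-1)^m)‖
        ≤ ∑ i ∈ S, ‖(ζ^k)^i - ∑ m ∈ Finset.range r, ((k*i).choose m : ℂ) * (ζ-1)^m‖ :=
          norm_sum_le _ _
      _ ≤ ∑ i ∈ S, ((r^3).choose r : ℝ) * u₀^r := by
          apply Finset.sum_le_sum
          intro i hi
          have h1 : (ζ^k)^i = ζ^(k*i) := by rw [pow_mul]
          rw [h1]
          refine le_trans (taylor_bound ζ hζ r (k*i)) ?_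
          have hle1 : ((k*i).choose r : ℝ) ≤ ((r^3).choose r : ℝ) := by
            have hki : k*i ≤ r^3 := by
              have hi' : i < r^2 - 2 := Finset.mem_range.mp (hS hi)
              calc k * i ≤ r * (r^2) := Nat.mul_le_mul hkr (by omega)
                _ = r^3 := by ring
            exact_mod_cast Nat.choose_le_choose r hki
          have hle2 : ‖ζ-1‖^r ≤ u₀^r := pow_le_pow_left₀ hunn hu r
          exact mul_le_mul hle1 hle2 (pow_nonneg hunn r) (Nat.cast_nonneg _)
      _ = (S.card : ℝ) * (((r^3).choose r : ℝ) * u₀^r) := by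
          rw [Finset.sum_const, nsmul_eq_mul]
      _ ≤ (r:ℝ)^2 * (((r^3).choose r : ℝ) * u₀^r) := by
          have hc : S.card ≤ r^2 := by
            have h := Finset.card_le_card hS
            rw [Finset.card_range] at h
            omega
          have : (S.card : ℝ) ≤ (r:ℝ)^2 := by exact_mod_cast hc
          apply mul_le_mul_of_nonneg_right this
          positivity
      _ ≤ (r:ℝ)^2 * ((r:ℝ)/100)^r / r.factorial := by
          have hfac : (0:ℝ) < (r.factorial : ℝ) := by exact_mod_cast r.factorial_pos
          have hd : ((r^3).choose r : ℝ) * (r.factorial : ℝ) ≤ ((r:ℝ)^3) ^ r := by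
            have h := Nat.descFactorial_le_pow (r^3) r
            rw [Nat.descFactorial_eq_factorial_mul_choose] at h
            have h2 : ((r.factorial * (r^3).choose r : ℕ) : ℝ) ≤ (((r^3)^r : ℕ) : ℝ) := by
              exact_mod_cast h
            push_cast at h2
            linarith
          have hx : ((r:ℝ)^3) ^ r * u₀^r = ((r:ℝ)/100) ^ r := by
            rw [← mul_pow]
            congr 1
            rw [hu₀def]
            field_simp
          rw [div_eq_mul_inv, mul_assoc]
          apply mul_le_mul_of_nonneg_left _ (by positivity : (0:ℝ) ≤ (r:ℝ)^2)
          rw [← hx]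
          rw [le_mul_inv_iff₀ hfac]
          calc ((r^3).choose r : ℝ) * u₀^r * (r.factorial : ℝ)
              = (((r^3).choose r : ℝ) * (r.factorial : ℝ)) * u₀^r := by ring
            _ ≤ ((r:ℝ)^3) ^ r * u₀^r := by
                apply mul_le_mul_of_nonneg_right hd
                positivity
  -- main term
  have hmain : ‖(∑ m ∈ Finset.range r, ((∑ i ∈ Sx, ((k*i).choose m : ℝ)) : ℂ) * (ζ-1)^m)
      - ∑ m ∈ Finset.range r, ((∑ i ∈ Sy, ((k*i).choose m : ℝ)) : ℂ) * (ζ-1)^m‖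
      ≤ (r:ℝ) * ((2:ℝ)^(r/4+1))⁻¹ := by
    rw [← Finset.sum_sub_distrib]
    calc ‖∑ m ∈ Finset.range r, (((∑ i ∈ Sx, ((k*i).choose m : ℝ)) : ℂ) * (ζ-1)^m
            - ((∑ i ∈ Sy, ((k*i).choose m : ℝ)) : ℂ) * (ζ-1)^m)‖
        ≤ ∑ m ∈ Finset.range r, ‖((∑ i ∈ Sx, ((k*i).choose m : ℝ)) : ℂ) * (ζ-1)^m
            - ((∑ i ∈ Sy, ((k*i).choose m : ℝ)) : ℂ) * (ζ-1)^m‖ := norm_sum_le _ _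
      _ ≤ ∑ m ∈ Finset.range r, ((2:ℝ)^(r/4+1))⁻¹ := by
          apply Finset.sum_le_sum
          intro m hm
          have hm' : m < r := Finset.mem_range.mp hm
          have h1 : ((∑ i ∈ Sx, ((k*i).choose m : ℝ)) : ℂ) * (ζ-1)^m
              - ((∑ i ∈ Sy, ((k*i).choose m : ℝ)) : ℂ) * (ζ-1)^m
              = (((∑ i ∈ Sx, ((k*i).choose m : ℝ)) - ∑ i ∈ Sy, ((k*i).choose m : ℝ) : ℝ) : ℂ)
                  * (ζ-1)^m := by
            push_cast
            ring
          rw [h1, norm_mul, Complex.norm_real]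
          calc |(∑ i ∈ Sx, ((k*i).choose m : ℝ)) - ∑ i ∈ Sy, ((k*i).choose m : ℝ)| * ‖(ζ-1)^m‖
              ≤ |(∑ i ∈ Sx, ((k*i).choose m : ℝ)) - ∑ i ∈ Sy, ((k*i).choose m : ℝ)| * u₀^m := by
                apply mul_le_mul_of_nonneg_left _ (abs_nonneg _)
                rw [norm_pow]
                exact pow_le_pow_left₀ hunn hu m
            _ ≤ ((2:ℝ)^(r/4+1))⁻¹ := hmom m hm'
      _ = (r:ℝ) * ((2:ℝ)^(r/4+1))⁻¹ := by
          rw [Finset.sum_const, Finset.card_range, nsmul_eq_mul]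
  -- combine
  set Tx : ℂ := ∑ m ∈ Finset.range r, ((∑ i ∈ Sx, ((k*i).choose m : ℝ)) : ℂ) * (ζ-1)^m with hTx
  set Ty : ℂ := ∑ m ∈ Finset.range r, ((∑ i ∈ Sy, ((k*i).choose m : ℝ)) : ℂ) * (ζ-1)^m with hTy
  have hdecomp : (∑ i ∈ Sx, (ζ^k)^i) - ∑ i ∈ Sy, (ζ^k)^i
      = ((∑ i ∈ Sx, (ζ^k)^i) - Tx) - ((∑ i ∈ Sy, (ζ^k)^i) - Ty) + (Tx - Ty) := by ring
  rw [hdecomp]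
  have t1 := htail Sx hSx
  have t2 := htail Sy hSy
  calc ‖((∑ i ∈ Sx, (ζ^k)^i) - Tx) - ((∑ i ∈ Sy, (ζ^k)^i) - Ty) + (Tx - Ty)‖
      ≤ ‖((∑ i ∈ Sx, (ζ^k)^i) - Tx) - ((∑ i ∈ Sy, (ζ^k)^i) - Ty)‖ + ‖Tx - Ty‖ :=
        norm_add_le _ _
    _ ≤ (‖(∑ i ∈ Sx, (ζ^k)^i) - Tx‖ + ‖(∑ i ∈ Sy, (ζ^k)^i) - Ty‖) + ‖Tx - Ty‖ := by
        have := norm_sub_le ((∑ i ∈ Sx, (ζ^k)^i) - Tx) ((∑ i ∈ Sy, (ζ^k)^i) - Ty)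
        linarith
    _ ≤ ((r:ℝ)^2 * ((r:ℝ)/100)^r / r.factorial + (r:ℝ)^2 * ((r:ℝ)/100)^r / r.factorial)
        + (r:ℝ) * ((2:ℝ)^(r/4+1))⁻¹ := by
        have := hmain
        gcongr
    _ = (r:ℝ) * ((2:ℝ)^(r/4+1))⁻¹ + 2 * (r:ℝ)^2 * ((r:ℝ)/100)^r / r.factorial := by ring

lemma final_num (r : ℕ) (hr : 1000000 ≤ r) :
    (r:ℝ) * ((r:ℝ) * ((2:ℝ)^(r/4+1))⁻¹ + 2 * (r:ℝ)^2 * ((r:ℝ)/100)^r / r.factorial)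
      ≤ (2:ℝ) ^ (-(r:ℝ)/20) := by
  have hR : (1000000:ℝ) ≤ (r:ℝ) := by exact_mod_cast hr
  have hR0 : (0:ℝ) < (r:ℝ) := by linarith
  have hlog2l : (0.6931471803:ℝ) < Real.log 2 := Real.log_two_gt_d9
  have hlog2u : Real.log 2 < 0.6931471808 := Real.log_two_lt_d9
  set R := (r:ℝ) with hRdef
  -- (2^q)⁻¹ ≤ exp (-R/6)
  have hq4 : r ≤ 4 * (r/4+1) := by omega
  have hqR : R ≤ 4 * ((r/4+1 : ℕ):ℝ) := by
    have := (Nat.cast_le (α := ℝ)).mpr hq4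
    push_cast at this ⊢
    linarith
  have h2q : Real.exp (R/6) ≤ (2:ℝ)^(r/4+1) := by
    have h1 : (2:ℝ)^(r/4+1) = Real.exp (Real.log 2 * ((r/4+1 : ℕ):ℝ)) := by
      rw [← Real.rpow_natCast 2 (r/4+1), Real.rpow_def_of_pos (by norm_num)]
    rw [h1]
    apply Real.exp_le_exp.mpr
    nlinarith
  have hA : R * R * ((2:ℝ)^(r/4+1))⁻¹ ≤ Real.exp (-(R/25)) / 2 := by
    have hinv : ((2:ℝ)^(r/4+1))⁻¹ ≤ (Real.exp (R/6))⁻¹ := by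
      apply inv_anti₀ (Real.exp_pos _) h2q
    have hexpinv : (Real.exp (R/6))⁻¹ = Real.exp (-(R/6)) := by
      rw [Real.exp_neg]
    -- 2 R^2 ≤ exp (R/8)
    have hpoly : 2 * R^2 ≤ Real.exp (R/8) := by
      have h := term_exp (R/8) (by positivity) 3
      have hfac : ((3:ℕ).factorial : ℝ) = 6 := by norm_num [Nat.factorial]
      rw [hfac] at h
      nlinarith
    have hsplit : Real.exp (-(R/6)) = Real.exp (-(R/25)) * Real.exp (-(R/6) + R/25) := by
      rw [← Real.exp_add]; ring_nf
    have hbound : R * R * Real.exp (-(R/6)) ≤ Real.exp (-(R/25)) / 2 := by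
      rw [hsplit]
      have h8 : Real.exp (-(R/6) + R/25) ≤ (2 * R^2)⁻¹ := by
        rw [show -(R/6) + R/25 = -(R*19/150) by ring]
        rw [Real.exp_neg]
        apply inv_anti₀ (by positivity) 
        refine le_trans hpoly (Real.exp_le_exp.mpr (by nlinarith))
      calc R * R * (Real.exp (-(R/25)) * Real.exp (-(R/6) + R/25))
          ≤ R * R * (Real.exp (-(R/25)) * (2*R^2)⁻¹) := by
            apply mul_le_mul_of_nonneg_left _ (by positivity)
            exact mul_le_mul_of_nonneg_left h8 (Real.exp_pos _).le
        _ = Real.exp (-(R/25)) * (R*R*(2*R^2)⁻¹) := by ring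
        _ ≤ Real.exp (-(R/25)) * (1/2) := by
            apply mul_le_mul_of_nonneg_left _ (Real.exp_pos _).le
            rw [show R*R*(2*R^2)⁻¹ = (R*R)/(2*R^2) by ring]
            rw [div_le_iff₀ (by positivity)]
            nlinarith
        _ = Real.exp (-(R/25)) / 2 := by ring
    calc R * R * ((2:ℝ)^(r/4+1))⁻¹ ≤ R * R * Real.exp (-(R/6)) := by
          rw [← hexpinv]
          exact mul_le_mul_of_nonneg_left hinv (by positivity)
      _ ≤ Real.exp (-(R/25)) / 2 := hbound
  -- tail: 2 R^3 (R/100)^r / r! ≤ exp(-(R/25))/2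
  have hB : R * (2 * R^2 * (R/100)^r / r.factorial) ≤ Real.exp (-(R/25)) / 2 := by
    have hfacpos : (0:ℝ) < (r.factorial : ℝ) := by exact_mod_cast r.factorial_pos
    have hT : (R/100)^r / r.factorial ≤ Real.exp (-(3*R)) := by
      have h1 : R^r ≤ r.factorial * Real.exp R := term_exp R hR0.le r
      have h64 : (64:ℝ)^r ≤ (100:ℝ)^r := by
        apply pow_le_pow_left₀ (by norm_num) (by norm_num)
      have h64exp : Real.exp (4*R) ≤ (64:ℝ)^r := by
        have he : (64:ℝ)^r = Real.exp (Real.log 2 * (6*r)) := by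
          rw [show (64:ℝ) = 2^(6:ℕ) by norm_num, ← pow_mul, ← Real.rpow_natCast 2 (6*r),
            Real.rpow_def_of_pos (by norm_num)]
          push_cast
          ring_nf
        rw [he]
        apply Real.exp_le_exp.mpr
        nlinarith
      have h100 : Real.exp (4*R) ≤ (100:ℝ)^r := le_trans h64exp h64
      have hkey : (R/100)^r = R^r / (100:ℝ)^r := div_pow R 100 r
      rw [hkey, div_div, div_le_iff₀ (by positivity)]
      have h7 : Real.exp R ≤ Real.exp (-(3*R)) * (100:ℝ)^r := by
        have h8 : Real.exp (-(3*R)) * Real.exp (4*R) = Real.exp R := by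
          rw [← Real.exp_add]; congr 1; ring
        calc Real.exp R = Real.exp (-(3*R)) * Real.exp (4*R) := h8.symm
          _ ≤ Real.exp (-(3*R)) * (100:ℝ)^r :=
            mul_le_mul_of_nonneg_left h100 (Real.exp_pos _).le
      calc R^r ≤ (r.factorial : ℝ) * Real.exp R := h1
        _ ≤ (r.factorial : ℝ) * (Real.exp (-(3*R)) * (100:ℝ)^r) :=
            mul_le_mul_of_nonneg_left h7 hfacpos.le
        _ = Real.exp (-(3*R)) * ((100:ℝ)^r * (r.factorial : ℝ)) := by ring
    have hpoly : 4 * R^3 ≤ Real.exp (2*R) := by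
      have h := term_exp (2*R) (by positivity) 4
      have hfac : ((4:ℕ).factorial : ℝ) = 24 := by norm_num [Nat.factorial]
      rw [hfac] at h
      have hcube : (0:ℝ) ≤ R^3 := by positivity
      have h9 : (1000000:ℝ) * R^3 ≤ R * R^3 := mul_le_mul_of_nonneg_right hR hcube
      ring_nf at h h9 ⊢
      nlinarith [h, h9, hcube]
    have hTnn : (0:ℝ) ≤ (R/100)^r / r.factorial := by positivity
    calc R * (2 * R^2 * (R/100)^r / r.factorial)
        = 2 * R^3 * ((R/100)^r / r.factorial) := by ring
      _ ≤ 2 * R^3 * Real.exp (-(3*R)) := by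
          apply mul_le_mul_of_nonneg_left hT (by positivity)
      _ ≤ Real.exp (-(R/25)) / 2 := by
          rw [show Real.exp (-(3*R)) = Real.exp (-(R/25)) * Real.exp (-(3*R)+R/25) by
            rw [← Real.exp_add]; ring_nf]
          have h8 : Real.exp (-(3*R)+R/25) ≤ (4*R^3)⁻¹ := by
            rw [show -(3*R)+R/25 = -(R*74/25) by ring, Real.exp_neg]
            apply inv_anti₀ (by positivity)
            exact le_trans hpoly (Real.exp_le_exp.mpr (by nlinarith))
          calc 2*R^3*(Real.exp (-(R/25)) * Real.exp (-(3*R)+R/25))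
              ≤ 2*R^3*(Real.exp (-(R/25)) * (4*R^3)⁻¹) := by
                apply mul_le_mul_of_nonneg_left _ (by positivity)
                exact mul_le_mul_of_nonneg_left h8 (Real.exp_pos _).le
            _ = Real.exp (-(R/25)) * (2*R^3*(4*R^3)⁻¹) := by ring
            _ ≤ Real.exp (-(R/25)) * (1/2) := by
                apply mul_le_mul_of_nonneg_left _ (Real.exp_pos _).le
                rw [show 2*R^3*(4*R^3)⁻¹ = (2*R^3)/(4*R^3) by ring, div_le_iff₀ (by positivity)]
                nlinarith
            _ = Real.exp (-(R/25)) / 2 := by ring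
  -- exp(-(R/25)) ≤ 2^(-R/20)
  have hfinal : Real.exp (-(R/25)) ≤ (2:ℝ) ^ (-(R)/20) := by
    rw [Real.rpow_def_of_pos (by norm_num)]
    apply Real.exp_le_exp.mpr
    nlinarith
  calc R * (R * ((2:ℝ)^(r/4+1))⁻¹ + 2 * R^2 * (R/100)^r / r.factorial)
      = R * R * ((2:ℝ)^(r/4+1))⁻¹ + R * (2 * R^2 * (R/100)^r / r.factorial) := by ring
    _ ≤ Real.exp (-(R/25)) / 2 + Real.exp (-(R/25)) / 2 := add_le_add hA hB
    _ = Real.exp (-(R/25)) := by ring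
    _ ≤ (2:ℝ) ^ (-(R)/20) := hfinal

/-- There is a universal constant `α > 0` such that for every deletion probability
`p ∈ [0,1)` there is `L₀` with: for every `r` with `L := r³ ≥ L₀` and every `1 ≤ k ≤ r`, there
exist distinct `x, y ∈ {0,1}^L` both starting with a run of `0`s of length `L^{1/3} - 1 = r - 1`,
such that for every `k`-mer `w` and every real `θ` with `|θ| ≤ α L^{-2/3}` we have
`|P_{w,x}(e^{iθ}) - P_{w,y}(e^{iθ})| ≤ 2^{-L^{1/3}/20}`. -/
theorem stmt_5 :
    ∃ α : ℝ, 0 < α ∧ ∀ p : ℝ, 0 ≤ p → p < 1 →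
      ∃ L₀ : ℕ, ∀ r : ℕ, L₀ ≤ r ^ 3 →
        ∀ k : ℕ, 1 ≤ k → k ≤ r →
          ∃ x y : Fin (r ^ 3) → Bool, x ≠ y ∧
            (∀ i : Fin (r ^ 3), i.1 + 2 ≤ r → x i = false ∧ y i = false) ∧
            ∀ w : Fin k → Bool, ∀ θ : ℝ, |θ| ≤ α * ((r : ℝ) ^ 3) ^ (-(2 : ℝ)/3) →
              ‖Pgen p x w (Complex.exp (θ * Complex.I)) -
                  Pgen p y w (Complex.exp (θ * Complex.I))‖ ≤
                (2 : ℝ) ^ (-(((r : ℝ) ^ 3) ^ ((1 : ℝ)/3)) / 20) := by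
  refine ⟨1/200, by norm_num, ?_⟩
  intro p hp0 hp1
  refine ⟨1000000^3, ?_⟩
  intro r hrL k hk1 hkr
  have hr : 1000000 ≤ r := by
    by_contra hcon
    push_neg at hcon
    have := Nat.pow_lt_pow_left hcon (n := 3) (by norm_num)
    omega
  have hr0 : 0 < r := by omega
  have hR0 : (0:ℝ) < (r:ℝ) := by exact_mod_cast hr0
  obtain ⟨Sx, Sy, hSx, hSy, hne, hmom⟩ := exists_pair r k hr hkr
  refine ⟨xstr r k Sx, xstr r k Sy, ?_, ?_, ?_⟩
  · -- distinct
    intro heq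
    apply hne
    ext i
    have key : ∀ (S S' : Finset ℕ), S ⊆ Finset.range (r^2-2) → S' ⊆ Finset.range (r^2-2) →
        xstr r k S = xstr r k S' → ∀ i ∈ S, i ∈ S' := by
      intro S S' hS hS' he i hi
      have hv : r + k*i < r^3 := by
        have h1 := pos_range hr hkr hS hi
        have h2 : 2*r ≥ 2 := by omega
        have h3 : r^3 ≥ 1000000^3 := Nat.pow_le_pow_left hr 3
        omega
      have hx : xstr r k S ⟨r + k*i, hv⟩ = true := by
        simp only [xstr, decide_eq_true_iff]
        exact ⟨i, hi, rfl⟩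
      rw [he] at hx
      simp only [xstr, decide_eq_true_iff] at hx
      obtain ⟨i', hi', he'⟩ := hx
      have hk0 : 0 < k := hk1
      have : i = i' := Nat.eq_of_mul_eq_mul_left hk0 (by omega)
      rwa [this]
    constructor
    · exact fun h => key Sx Sy hSx hSy heq i h
    · exact fun h => key Sy Sx hSy hSx heq.symm i h
  · -- prefix of zeros
    intro i hi
    constructor <;>
    · simp only [xstr, decide_eq_false_iff_not]
      rintro ⟨i', _, he⟩
      omega
  · -- main bound
    intro w θ hθ
    set z : ℂ := Complex.exp (θ * Complex.I) with hzdef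
    set ζ : ℂ := (p:ℂ) + (1-(p:ℂ))*z with hζdef
    -- rpow simplifications
    have hrpow1 : ((r:ℝ)^3) ^ (-(2:ℝ)/3) = ((r:ℝ)^2)⁻¹ := by
      rw [← Real.rpow_natCast (r:ℝ) 3, ← Real.rpow_mul hR0.le]
      norm_num
    have hrpow2 : (((r:ℝ)^3) ^ ((1:ℝ)/3)) = (r:ℝ) := by
      rw [← Real.rpow_natCast (r:ℝ) 3, ← Real.rpow_mul hR0.le]
      norm_num
    have hθ' : |θ| ≤ 1/(200*(r:ℝ)^2) := by
      rw [hrpow1] at hθ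
      calc |θ| ≤ 1/200 * ((r:ℝ)^2)⁻¹ := hθ
        _ = 1/(200*(r:ℝ)^2) := by field_simp
    -- |ζ| ≤ 1
    have habs_z : ‖z‖ = 1 := by
      rw [hzdef, Complex.norm_exp_ofReal_mul_I]
    have hz1 : ‖ζ‖ ≤ 1 := by
      rw [hζdef]
      have h1 : ‖(p:ℂ)‖ = p := by
        rw [Complex.norm_real, Real.norm_eq_abs, abs_of_nonneg hp0]
      have h2 : ‖1 - (p:ℂ)‖ = 1 - p := by
        rw [show (1:ℂ) - (p:ℂ) = ((1 - p : ℝ) : ℂ) by push_cast; ring,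
          Complex.norm_real, Real.norm_eq_abs, abs_of_nonneg (by linarith)]
      calc ‖(p:ℂ) + (1-(p:ℂ))*z‖ ≤ ‖(p:ℂ)‖ + ‖(1-(p:ℂ))*z‖ := norm_add_le _ _
        _ = p + (1-p) := by rw [norm_mul, h1, h2, habs_z, mul_one]
        _ = 1 := by ring
    -- |ζ - 1| small
    have hu : ‖ζ - 1‖ ≤ 1/(100*(r:ℝ)^2) := by
      have hθI : ‖(θ:ℂ) * Complex.I‖ = |θ| := by
        rw [norm_mul, Complex.norm_I, Complex.norm_real, Real.norm_eq_abs, mul_one]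
      have hθsmall : ‖(θ:ℂ) * Complex.I‖ ≤ 1 := by
        rw [hθI]
        have hR1 : (1:ℝ) ≤ (r:ℝ) := by exact_mod_cast hr0
        have : (1:ℝ)/(200*(r:ℝ)^2) ≤ 1 := by
          rw [div_le_one (by positivity)]
          nlinarith [hR1]
        linarith [hθ']
      have hz_sub : ‖z - 1‖ ≤ 2 * |θ| := by
        rw [hzdef]
        calc ‖Complex.exp ((θ:ℂ) * Complex.I) - 1‖
            ≤ 2 * ‖(θ:ℂ) * Complex.I‖ := Complex.norm_exp_sub_one_le hθsmall
          _ = 2 * |θ| := by rw [hθI]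
      have hfact : ζ - 1 = (1 - (p:ℂ)) * (z - 1) := by
        rw [hζdef]; ring
      have h2 : ‖1 - (p:ℂ)‖ = 1 - p := by
        rw [show (1:ℂ) - (p:ℂ) = ((1 - p : ℝ) : ℂ) by push_cast; ring,
          Complex.norm_real, Real.norm_eq_abs, abs_of_nonneg (by linarith)]
      calc ‖ζ - 1‖ = ‖1 - (p:ℂ)‖ * ‖z - 1‖ := by rw [hfact, norm_mul]
        _ ≤ 1 * (2 * |θ|) := by
            apply mul_le_mul (by linarith) hz_sub (norm_nonneg _) zero_le_one
        _ = 2 * |θ| := one_mul _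
        _ ≤ 2 * (1/(200*(r:ℝ)^2)) := by linarith [hθ']
        _ = 1/(100*(r:ℝ)^2) := by field_simp; ring
    -- main chain
    have hkR : (k:ℝ) ≤ (r:ℝ) := by exact_mod_cast hkr
    have h1 := Pgen_diff_le p z hr hk1 hkr hSx hSy w (by rw [← hζdef]; exact hz1)
    have h2 := Hdiff_le hr hkr hSx hSy ζ hz1 hu hmom
    have hBnn : (0:ℝ) ≤ (r:ℝ) * ((2:ℝ)^(r/4+1))⁻¹ + 2 * (r:ℝ)^2 * ((r:ℝ)/100)^r / r.factorial := by
      positivity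
    have h3 := final_num r hr
    rw [hrpow2]
    calc ‖Pgen p (xstr r k Sx) w z - Pgen p (xstr r k Sy) w z‖
        ≤ (k:ℝ) * ‖(∑ i ∈ Sx, (ζ^k)^i) - ∑ i ∈ Sy, (ζ^k)^i‖ := by
          rw [hζdef]
          exact h1
      _ ≤ (k:ℝ) * ((r:ℝ) * ((2:ℝ)^(r/4+1))⁻¹ + 2 * (r:ℝ)^2 * ((r:ℝ)/100)^r / r.factorial) := by
          exact mul_le_mul_of_nonneg_left h2 (Nat.cast_nonneg k)
      _ ≤ (r:ℝ) * ((r:ℝ) * ((2:ℝ)^(r/4+1))⁻¹ + 2 * (r:ℝ)^2 * ((r:ℝ)/100)^r / r.factorial) := by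
          exact mul_le_mul_of_nonneg_right hkR hBnn
      _ ≤ (2:ℝ) ^ (-(r:ℝ)/20) := h3
end

section
/- Let p ∈ [0,1), let r ≥ 1, M ≥ 1 be integers with L = rM, and let 1 ≤ k ≤ r. Let x ∈ S and let 1 ≤ j < k. Then for all z ∈ ℂ: P_{e_j,x}(z) = (p+(1−p)z)·P_{e_{j+1},x}(z). -/
open Finset

/-- Membership in the set `S ⊆ {0,1}^L`: `x_i = 0` whenever `r ∤ (i+1)`, and `x_{L-1} = 0`.
These are exactly the strings `s₀b₁s₀b₂…s₀b_{M-1}s₀0` with `s₀ = 0^{r-1}`. -/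
def memS (r : ℕ) {L : ℕ} (x : Fin L → Bool) : Prop :=
  (∀ i : Fin L, ¬ r ∣ (i.1 + 1) → x i = false) ∧
  (∀ h : 0 < L, x ⟨L - 1, Nat.sub_lt h Nat.one_pos⟩ = false)

/-- `e_j ∈ {0,1}^k` (for `1 ≤ j ≤ k`): the string with a single `1` at (0-based) index `j - 1`. -/
def evec (k j : ℕ) : Fin k → Bool := fun t => decide (t.1 + 1 = j)

/-- For `x ∈ S` and `1 ≤ j < k`, `P_{e_j,x}(z) = (p + (1-p)z) · P_{e_{j+1},x}(z)`. -/
theorem stmt_7 (p : ℝ) (hp0 : 0 ≤ p) (hp1 : p < 1) (r M k : ℕ)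
    (hr : 1 ≤ r) (hM : 1 ≤ M) (hk1 : 1 ≤ k) (hkr : k ≤ r)
    (x : Fin (r * M) → Bool) (hx : memS r x)
    (j : ℕ) (hj1 : 1 ≤ j) (hjk : j < k) (z : ℂ) :
    Pgen p x (evec k j) z = ((p : ℂ) + (1 - (p : ℂ)) * z) * Pgen p x (evec k (j + 1)) z := by
  classical
  have hkn : k ≤ r * M := le_trans hkr (Nat.le_mul_of_pos_right r hM)
  have hxeq : ∀ (a b : ℕ) (ha : a < r * M) (hb : b < r * M), a = b →
      x ⟨a, ha⟩ = x ⟨b, hb⟩ := by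
    intro a b ha hb h; subst h; rfl
  have hdvd : ∀ (i : ℕ) (h : i < r * M), x ⟨i, h⟩ = true → r ∣ (i + 1) := by
    intro i h hT
    by_contra hd
    have := hx.1 ⟨i, h⟩ hd
    rw [this] at hT
    exact Bool.false_ne_true hT
  have hfalse : ∀ (i : ℕ) (h : i < r * M), ¬ r ∣ (i + 1) → x ⟨i, h⟩ = false :=
    fun i h hd => hx.1 ⟨i, h⟩ hd
  -- Lemma A : no occurrence of e_j at position 0
  have hA : indAt x (evec k j) 0 = 0 := by
    rw [indAt, if_neg]
    intro hocc
    have hjk' : j - 1 < k := by omega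
    have hlt : 0 + (j - 1) < r * M := by omega
    have h1 := hocc ⟨j - 1, hjk'⟩ hlt
    have h2 : evec k j ⟨j - 1, hjk'⟩ = true := by
      simp only [evec, decide_eq_true_eq]; omega
    rw [h2] at h1
    have h3 := hdvd _ hlt h1
    have h4 : r ≤ 0 + (j - 1) + 1 := Nat.le_of_dvd (by omega) h3
    omega
  -- Lemma C : no occurrence of e_{j+1} at position n - k
  have hC : indAt x (evec k (j + 1)) (r * M - k) = 0 := by
    rw [indAt, if_neg]
    intro hocc
    have hlt : r * M - k + j < r * M := by omega
    have h1 := hocc ⟨j, hjk⟩ hlt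
    have h2 : evec k (j + 1) ⟨j, hjk⟩ = true := by
      simp only [evec, decide_eq_true_eq]
    rw [h2] at h1
    by_cases hcase : j + 1 = k
    · have hL : 0 < r * M := by omega
      have h5 := hx.2 hL
      have h6 := hxeq (r * M - k + j) (r * M - 1) hlt (Nat.sub_lt hL Nat.one_pos) (by omega)
      rw [h6, h5] at h1
      exact Bool.false_ne_true h1
    · have h3 := hdvd _ hlt h1
      have h4 : r ∣ r * M := ⟨M, rfl⟩
      have h5 := Nat.dvd_sub h4 h3
      have h6 : r * M - (r * M - k + j + 1) = k - j - 1 := by omega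
      rw [h6] at h5
      have h7 : r ≤ k - j - 1 := Nat.le_of_dvd (by omega) h5
      omega
  -- Lemma B : shift identity for indicators
  have hB : ∀ i : ℕ, i + k < r * M →
      indAt x (evec k j) (i + 1) = indAt x (evec k (j + 1)) i := by
    intro i hik
    have hiff : occAt x (evec k j) (i + 1) ↔ occAt x (evec k (j + 1)) i := by
      constructor
      · intro hocc t ht
        have hjlt : i + j < r * M := by omega
        have hTrue : x ⟨i + j, hjlt⟩ = true := by
          have hb : (i + 1) + (j - 1) < r * M := by omega
          have h1 := hocc ⟨j - 1, by omega⟩ hb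
          have h2 : evec k j ⟨j - 1, by omega⟩ = true := by
            simp only [evec, decide_eq_true_eq]; omega
          rw [h2] at h1
          rw [hxeq (i + j) ((i + 1) + (j - 1)) hjlt hb (by omega)]
          exact h1
        by_cases hcase : t.1 = j
        · have h2 : evec k (j + 1) t = true := by
            simp only [evec, decide_eq_true_eq]; omega
          rw [h2, hxeq (i + t.1) (i + j) ht hjlt (by omega)]
          exact hTrue
        · have h2 : evec k (j + 1) t = false := by
            simp only [evec, decide_eq_false_iff_not]; omega
          rw [h2]
          by_cases hz : t.1 = 0
          · -- x_i = false since r ∣ i + j + 1 and 0 < j < r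
            have hd := hdvd _ hjlt hTrue
            apply hfalse
            intro hd2
            have h5 := Nat.dvd_sub hd hd2
            have h6 : i + j + 1 - (i + t.1 + 1) = j := by omega
            rw [h6] at h5
            have := Nat.le_of_dvd (by omega) h5
            omega
          · have hb : (i + 1) + (t.1 - 1) < r * M := by omega
            have h1 := hocc ⟨t.1 - 1, by omega⟩ hb
            have h3 : evec k j ⟨t.1 - 1, by omega⟩ = false := by
              simp only [evec, decide_eq_false_iff_not]; omega
            rw [h3] at h1
            rw [hxeq (i + t.1) ((i + 1) + (t.1 - 1)) ht hb (by omega)]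
            exact h1
      · intro hocc t ht
        have hjlt : i + j < r * M := by omega
        have hTrue : x ⟨i + j, hjlt⟩ = true := by
          have h1 := hocc ⟨j, hjk⟩ hjlt
          have h2 : evec k (j + 1) ⟨j, hjk⟩ = true := by
            simp only [evec, decide_eq_true_eq]
          rw [h2] at h1
          exact h1
        by_cases hcase : t.1 = k - 1
        · -- position i + k : false since r ∣ i + j + 1 and 1 ≤ k - j ≤ r - 1
          have h2 : evec k j t = false := by
            simp only [evec, decide_eq_false_iff_not]; omega
          rw [h2]
          have hd := hdvd _ hjlt hTrue
          apply hfalse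
          intro hd2
          have h5 := Nat.dvd_sub hd2 hd
          have h6 : (i + 1) + t.1 + 1 - (i + j + 1) = k - j := by omega
          rw [h6] at h5
          have := Nat.le_of_dvd (by omega) h5
          omega
        · have hb : i + (t.1 + 1) < r * M := by omega
          have h1 := hocc ⟨t.1 + 1, by omega⟩ hb
          have h3 : evec k (j + 1) ⟨t.1 + 1, by omega⟩ = evec k j t := by
            simp only [evec, decide_eq_decide]; omega
          rw [h3] at h1
          rw [hxeq ((i + 1) + t.1) (i + (t.1 + 1)) ht hb (by omega)]
          exact h1
    rw [indAt, indAt, if_congr hiff rfl rfl]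
  -- Main computation
  simp only [Pgen]
  rw [Finset.mul_sum]
  rw [Finset.sum_range_succ'
    (fun i => ((indAt x (evec k j) i : ℝ) : ℂ) * ((p : ℂ) + (1 - (p : ℂ)) * z) ^ i)
    (r * M - k)]
  rw [Finset.sum_range_succ
    (fun i => ((p : ℂ) + (1 - (p : ℂ)) * z) *
      (((indAt x (evec k (j + 1)) i : ℝ) : ℂ) * ((p : ℂ) + (1 - (p : ℂ)) * z) ^ i))
    (r * M - k)]
  rw [hA, hC]
  simp only [Complex.ofReal_zero, zero_mul, add_zero, mul_zero]
  apply Finset.sum_congr rfl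
  intro i hi
  rw [Finset.mem_range] at hi
  rw [hB i (by omega)]
  ring
end

section
/- Let p ∈ [0,1), let r ≥ 1, M ≥ 1 be integers with L = rM, and let 1 ≤ k ≤ r. Let x, y ∈ S and let z ∈ ℂ with |z| ≤ 1. Then |P_{0^k,x}(z) − P_{0^k,y}(z)| ≤ k·|P_{e_k,x}(z) − P_{e_k,y}(z)|. -/
open Finset

/-- single-position indicator -/
noncomputable def onef {n : ℕ} (x : Fin n → Bool) (m : ℕ) : ℂ :=
  if h : m < n then (if x ⟨m, h⟩ then 1 else 0) else 0

lemma dvd_close_eq {r a b : ℕ} (ha : r ∣ a) (hb : r ∣ b)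
    (h1 : a < b + r) (h2 : b < a + r) : a = b := by
  rcases le_total a b with h | h
  · have hd : r ∣ b - a := Nat.dvd_sub hb ha
    have := Nat.eq_zero_of_dvd_of_lt hd (by omega)
    omega
  · have hd : r ∣ a - b := Nat.dvd_sub ha hb
    have := Nat.eq_zero_of_dvd_of_lt hd (by omega)
    omega

lemma onef_supp {r L : ℕ} (hr : 1 ≤ r) (hrL : r ∣ L) {x : Fin L → Bool} (hx : memS r x)
    {m : ℕ} (h : onef x m ≠ 0) : m < L ∧ r ∣ m + 1 ∧ r ≤ m + 1 ∧ m + 1 + r ≤ L := by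
  by_cases hm : m < L
  case neg =>
    exfalso
    apply h
    unfold onef
    rw [dif_neg hm]
  · have hxm : x ⟨m, hm⟩ = true := by
      by_contra hc
      rw [Bool.not_eq_true] at hc
      apply h
      unfold onef
      rw [dif_pos hm, hc]
      simp
    have hdvd : r ∣ m + 1 := by
      by_contra hc
      rw [hx.1 ⟨m, hm⟩ hc] at hxm
      exact Bool.false_ne_true hxm
    have hLpos : 0 < L := lt_of_le_of_lt (Nat.zero_le m) hm
    have hne : m ≠ L - 1 := by
      intro hmeq
      have h2 := hx.2 hLpos
      have he : (⟨m, hm⟩ : Fin L) = ⟨L - 1, Nat.sub_lt hLpos Nat.one_pos⟩ := Fin.ext hmeq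
      rw [he, h2] at hxm
      exact Bool.false_ne_true hxm
    have h1 : r ≤ m + 1 := Nat.le_of_dvd (by omega) hdvd
    have hlt : m + 1 < L := by omega
    have hd2 : r ∣ L - (m + 1) := Nat.dvd_sub hrL hdvd
    have h3 : r ≤ L - (m + 1) := Nat.le_of_dvd (by omega) hd2
    exact ⟨hm, hdvd, h1, by omega⟩

lemma indAt_zero_eq {r L k : ℕ} (hr : 1 ≤ r) (hk1 : 1 ≤ k) (hkr : k ≤ r)
    {x : Fin L → Bool} (hx : memS r x) {j : ℕ} (hj : j + k ≤ L) :
    ((indAt x (fun _ : Fin k => false) j : ℝ) : ℂ)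
      = 1 - ∑ t ∈ Finset.range k, onef x (j + t) := by
  unfold indAt
  by_cases hocc : occAt x (fun _ : Fin k => false) j
  · rw [if_pos hocc]
    have hz : ∀ t ∈ Finset.range k, onef x (j + t) = 0 := by
      intro t ht
      simp only [Finset.mem_range] at ht
      have hlt : j + t < L := by omega
      unfold onef
      rw [dif_pos hlt, hocc ⟨t, ht⟩ hlt]
      simp
    rw [Finset.sum_eq_zero hz]
    norm_num
  · rw [if_neg hocc]
    unfold occAt at hocc
    push_neg at hocc
    obtain ⟨t0, h0, hx0⟩ := hocc
    have hx0' : x ⟨j + t0.1, h0⟩ = true := by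
      simpa using hx0
    have hsum : ∑ t ∈ Finset.range k, onef x (j + t) = 1 := by
      rw [Finset.sum_eq_single t0.1]
      · unfold onef
        rw [dif_pos h0, hx0']
        simp
      · intro t ht hne
        simp only [Finset.mem_range] at ht
        have hlt : j + t < L := by omega
        unfold onef
        rw [dif_pos hlt]
        by_cases hxt : x ⟨j + t, hlt⟩ = true
        · exfalso
          have d1 : r ∣ j + t + 1 := by
            by_contra hc
            rw [hx.1 _ hc] at hxt
            exact Bool.false_ne_true hxt
          have d2 : r ∣ j + t0.1 + 1 := by
            by_contra hc
            rw [hx.1 _ hc] at hx0'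
            exact Bool.false_ne_true hx0'
          have ht0 := t0.2
          have := dvd_close_eq d1 d2 (by omega) (by omega)
          omega
        · rw [Bool.not_eq_true] at hxt
          simp [hxt]
      · intro hnot
        exact absurd (Finset.mem_range.mpr t0.2) hnot
    rw [hsum]
    norm_num
  
lemma indAt_evec_eq {r L k : ℕ} (hr : 1 ≤ r) (hk1 : 1 ≤ k) (hkr : k ≤ r)
    {x : Fin L → Bool} (hx : memS r x) {j : ℕ} (hj : j + k ≤ L) :
    ((indAt x (evec k k) j : ℝ) : ℂ) = onef x (j + (k - 1)) := by
  have hlt : j + (k - 1) < L := by omega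
  unfold indAt onef
  rw [dif_pos hlt]
  by_cases hxk : x ⟨j + (k - 1), hlt⟩ = true
  · have hocc : occAt x (evec k k) j := by
      intro t ht
      by_cases hteq : t.1 + 1 = k
      · have he : (⟨j + t.1, ht⟩ : Fin L) = ⟨j + (k - 1), hlt⟩ := Fin.ext (show j + t.1 = j + (k - 1) by omega)
        rw [he, hxk]
        simp [evec, hteq]
      · have hevec : evec k k t = false := by simp [evec, hteq]
        rw [hevec]
        have hdk : r ∣ j + (k - 1) + 1 := by
          by_contra hc
          rw [hx.1 _ hc] at hxk
          exact Bool.false_ne_true hxk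
        by_contra hc
        have hxt : x ⟨j + t.1, ht⟩ = true := by simpa using hc
        have d1 : r ∣ j + t.1 + 1 := by
          by_contra hc2
          rw [hx.1 _ hc2] at hxt
          exact Bool.false_ne_true hxt
        have ht2 : t.1 < k := t.2
        have e1 : j + t.1 + 1 < j + (k - 1) + 1 + r := by omega
        have e2 : j + (k - 1) + 1 < j + t.1 + 1 + r := by omega
        have := dvd_close_eq d1 hdk e1 e2
        omega
    rw [if_pos hocc, hxk]
    simp
  · rw [if_neg]
    · rw [Bool.not_eq_true] at hxk
      simp [hxk]
    · intro hocc
      have hh : j + (⟨k - 1, by omega⟩ : Fin k).1 < L := by simpa using hlt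
      have := hocc ⟨k - 1, by omega⟩ hh
      have hev : evec k k ⟨k - 1, by omega⟩ = true := by
        simp only [evec]
        simp only [decide_eq_true_eq]
        omega
      rw [hev] at this
      have he : (⟨j + (⟨k - 1, by omega⟩ : Fin k).1, hh⟩ : Fin L) = ⟨j + (k - 1), hlt⟩ :=
        Fin.ext rfl
      rw [he] at this
      exact hxk this

lemma sum_shift {r L k t : ℕ} (hr : 1 ≤ r) (hk1 : 1 ≤ k) (hkr : k ≤ r) (hkL : k ≤ L)
    (hrL : r ∣ L) (ht : t < k) {x : Fin L → Bool} (hx : memS r x) (q : ℂ) :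
    ∑ j ∈ Finset.range (L - k + 1), onef x (j + t) * q ^ j
      = ∑ m ∈ Finset.range L, onef x m * q ^ (m - t) := by
  have key : ∑ j ∈ Finset.range (L - k + 1), onef x (j + t) * q ^ j
      = ∑ m ∈ Finset.Ico t (L - k + 1 + t), onef x m * q ^ (m - t) := by
    rw [Finset.sum_Ico_eq_sum_range]
    have hN : L - k + 1 + t - t = L - k + 1 := by omega
    rw [hN]
    refine Finset.sum_congr rfl fun j _ => ?_
    rw [add_comm t j, Nat.add_sub_cancel]
  rw [key]
  apply Finset.sum_subset
  · intro m hm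
    simp only [Finset.mem_Ico] at hm
    simp only [Finset.mem_range]
    omega
  · intro m hm hnot
    simp only [Finset.mem_range] at hm
    simp only [Finset.mem_Ico, not_and_or, not_le] at hnot
    by_cases h0 : onef x m = 0
    · rw [h0, zero_mul]
    · exfalso
      obtain ⟨_, _, h1, h2⟩ := onef_supp hr hrL hx h0
      rcases hnot with h | h <;> omega

lemma sum_factor {r L k t : ℕ} (hr : 1 ≤ r) (hk1 : 1 ≤ k) (hkr : k ≤ r)
    (hrL : r ∣ L) (ht : t < k) {x : Fin L → Bool} (hx : memS r x) (q : ℂ) :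
    ∑ m ∈ Finset.range L, onef x m * q ^ (m - t)
      = q ^ (k - 1 - t) * ∑ m ∈ Finset.range L, onef x m * q ^ (m - (k - 1)) := by
  rw [Finset.mul_sum]
  refine Finset.sum_congr rfl fun m hm => ?_
  by_cases h0 : onef x m = 0
  · simp [h0]
  · obtain ⟨_, _, h1, h2⟩ := onef_supp hr hrL hx h0
    have he : m - t = (k - 1 - t) + (m - (k - 1)) := by omega
    rw [he, pow_add]
    ring

lemma Pgen_identity (p : ℝ) {r L k : ℕ} (hr : 1 ≤ r) (hk1 : 1 ≤ k) (hkr : k ≤ r)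
    (hkL : k ≤ L) (hrL : r ∣ L)
    {x : Fin L → Bool} (hx : memS r x) (z : ℂ) :
    Pgen p x (fun _ : Fin k => false) z
      = (∑ j ∈ Finset.range (L - k + 1), ((p : ℂ) + (1 - (p : ℂ)) * z) ^ j)
        - (∑ u ∈ Finset.range k, ((p : ℂ) + (1 - (p : ℂ)) * z) ^ u) * Pgen p x (evec k k) z := by
  set q : ℂ := (p : ℂ) + (1 - (p : ℂ)) * z with hq
  have hjk : ∀ j ∈ Finset.range (L - k + 1), j + k ≤ L := by
    intro j hj
    simp only [Finset.mem_range] at hj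
    omega
  have hPe : Pgen p x (evec k k) z = ∑ m ∈ Finset.range L, onef x m * q ^ (m - (k - 1)) := by
    unfold Pgen
    rw [← sum_shift hr hk1 hkr hkL hrL (by omega : k - 1 < k) hx q]
    refine Finset.sum_congr rfl fun j hj => ?_
    rw [indAt_evec_eq hr hk1 hkr hx (hjk j hj)]
  rw [hPe]
  unfold Pgen
  calc ∑ j ∈ Finset.range (L - k + 1), ((indAt x (fun _ : Fin k => false) j : ℝ) : ℂ) * q ^ j
      = ∑ j ∈ Finset.range (L - k + 1), (1 - ∑ t ∈ Finset.range k, onef x (j + t)) * q ^ j := by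
        refine Finset.sum_congr rfl fun j hj => ?_
        rw [indAt_zero_eq hr hk1 hkr hx (hjk j hj)]
    _ = (∑ j ∈ Finset.range (L - k + 1), q ^ j)
        - ∑ t ∈ Finset.range k, ∑ j ∈ Finset.range (L - k + 1), onef x (j + t) * q ^ j := by
        rw [Finset.sum_comm]
        rw [← Finset.sum_sub_distrib]
        refine Finset.sum_congr rfl fun j hj => ?_
        rw [sub_mul, one_mul, Finset.sum_mul]
    _ = (∑ j ∈ Finset.range (L - k + 1), q ^ j)
        - (∑ u ∈ Finset.range k, q ^ u) * ∑ m ∈ Finset.range L, onef x m * q ^ (m - (k - 1)) := by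
        congr 1
        have : ∀ t ∈ Finset.range k,
            ∑ j ∈ Finset.range (L - k + 1), onef x (j + t) * q ^ j
              = q ^ (k - 1 - t) * ∑ m ∈ Finset.range L, onef x m * q ^ (m - (k - 1)) := by
          intro t ht
          simp only [Finset.mem_range] at ht
          rw [sum_shift hr hk1 hkr hkL hrL ht hx q, sum_factor hr hk1 hkr hrL ht hx q]
        rw [Finset.sum_congr rfl this, ← Finset.sum_mul]
        congr 1
        exact Finset.sum_range_reflect (fun u => q ^ u) k


/-- For `x, y ∈ S` and `|z| ≤ 1`,
`|P_{0^k,x}(z) - P_{0^k,y}(z)| ≤ k · |P_{e_k,x}(z) - P_{e_k,y}(z)|`. -/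
theorem stmt_8 (p : ℝ) (hp0 : 0 ≤ p) (hp1 : p < 1) (r M k : ℕ)
    (hr : 1 ≤ r) (hM : 1 ≤ M) (hk1 : 1 ≤ k) (hkr : k ≤ r)
    (x y : Fin (r * M) → Bool) (hx : memS r x) (hy : memS r y)
    (z : ℂ) (hz : ‖z‖ ≤ 1) :
    ‖Pgen p x (fun _ : Fin k => false) z - Pgen p y (fun _ : Fin k => false) z‖ ≤
      (k : ℝ) * ‖Pgen p x (evec k k) z - Pgen p y (evec k k) z‖ := by
  have hrL : r ∣ r * M := dvd_mul_right r M
  have hkL : k ≤ r * M := le_trans hkr (Nat.le_mul_of_pos_right r hM)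
  set q : ℂ := (p : ℂ) + (1 - (p : ℂ)) * z with hq
  have hxid := Pgen_identity p hr hk1 hkr hkL hrL hx z
  have hyid := Pgen_identity p hr hk1 hkr hkL hrL hy z
  have hdiff : Pgen p x (fun _ : Fin k => false) z - Pgen p y (fun _ : Fin k => false) z
      = (∑ u ∈ Finset.range k, q ^ u) * (Pgen p y (evec k k) z - Pgen p x (evec k k) z) := by
    rw [hxid, hyid]; ring
  rw [hdiff, norm_mul]
  have habsq : ‖q‖ ≤ 1 := by
    have h1 : ‖q‖ ≤ ‖(p : ℂ)‖ + ‖(1 - (p : ℂ)) * z‖ :=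
      norm_add_le _ _
    have h2 : ‖(p : ℂ)‖ = p := Complex.norm_of_nonneg hp0
    have h3 : ‖(1 - (p : ℂ)) * z‖ = (1 - p) * ‖z‖ := by
      rw [norm_mul]
      congr 1
      have hc : (1 - (p : ℂ)) = ((1 - p : ℝ) : ℂ) := by push_cast; ring
      rw [hc, Complex.norm_of_nonneg (by linarith)]
    nlinarith [norm_nonneg z]
  have hsumle : ‖∑ u ∈ Finset.range k, q ^ u‖ ≤ (k : ℝ) := by
    calc ‖∑ u ∈ Finset.range k, q ^ u‖
        ≤ ∑ u ∈ Finset.range k, ‖q ^ u‖ := norm_sum_le _ _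
      _ ≤ ∑ _u ∈ Finset.range k, (1 : ℝ) := by
          refine Finset.sum_le_sum fun u _ => ?_
          rw [norm_pow]
          exact pow_le_one₀ (norm_nonneg q) habsq
      _ = (k : ℝ) := by simp
  rw [norm_sub_rev (Pgen p y (evec k k) z)]
  exact mul_le_mul_of_nonneg_right hsumle (norm_nonneg _)
end

section
/- Let a ∈ [0,1/8] and ρ ≥ 1. For any θ ∈ ℝ, set u = ρ·e^{iθ} and z = (1−4a) + 4a·(u+u^{−1})/2 ∈ ℂ (a point on the boundary of the scaled Bernstein ellipse Ẽ_{a,ρ}). Then |z| ≤ 1 + 2a(ρ−1)²/ρ. -/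
/-- For `a ∈ [0,1/8]`, `ρ ≥ 1`, `θ ∈ ℝ`, the point
`z = (1-4a) + 4a (u + u⁻¹)/2` with `u = ρ e^{iθ}` (on the boundary of the scaled Bernstein
ellipse `Ẽ_{a,ρ}`) satisfies `|z| ≤ 1 + 2a(ρ-1)²/ρ`. -/
theorem stmt_9 (a ρ θ : ℝ) (ha0 : 0 ≤ a) (ha1 : a ≤ 1/8) (hρ : 1 ≤ ρ) :
    ‖((1 - 4 * (a : ℂ)) + 4 * (a : ℂ) *
        (((ρ : ℂ) * Complex.exp (θ * Complex.I)) +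
          ((ρ : ℂ) * Complex.exp (θ * Complex.I))⁻¹) / 2)‖ ≤
      1 + 2 * a * (ρ - 1) ^ 2 / ρ := by
  have hρ0 : (0:ℝ) < ρ := lt_of_lt_of_le one_pos hρ
  have hρc : (ρ:ℂ) ≠ 0 := by exact_mod_cast hρ0.ne'
  set c := Real.cos θ
  set s := Real.sin θ
  set re : ℝ := 1 - 4*a + 2*a*(ρ + ρ⁻¹)*c with hre
  set im : ℝ := 2*a*(ρ - ρ⁻¹)*s with him
  have hz : ((1 - 4 * (a : ℂ)) + 4 * (a : ℂ) *
        (((ρ : ℂ) * Complex.exp (θ * Complex.I)) +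
          ((ρ : ℂ) * Complex.exp (θ * Complex.I))⁻¹) / 2)
      = Complex.ofReal re + Complex.ofReal im * Complex.I := by
    rw [mul_inv, ← Complex.exp_neg]
    have h1 : Complex.exp ((θ:ℂ) * Complex.I) = (c:ℂ) + (s:ℂ) * Complex.I := by
      rw [Complex.exp_mul_I]; simp [c, s]
    have h2 : Complex.exp (-((θ:ℂ) * Complex.I)) = (c:ℂ) - (s:ℂ) * Complex.I := by
      rw [← neg_mul, Complex.exp_mul_I]; simp [c, s, Complex.cos_neg, Complex.sin_neg]
      ring
    rw [h1, h2, hre, him]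
    push_cast
    field_simp
    ring
  rw [hz]
  have habs : ‖(re:ℂ) + (im:ℂ) * Complex.I‖ = Real.sqrt (re^2 + im^2) := by
    rw [Complex.norm_def, Complex.normSq_apply]
    simp
    ring_nf
  rw [habs]
  have hR : 1 + 2 * a * (ρ - 1) ^ 2 / ρ = (1 - 4*a) + 2*a*(ρ + ρ⁻¹) := by
    field_simp; ring
  rw [hR]
  have hcs : c^2 + s^2 = 1 := by rw [add_comm]; exact Real.sin_sq_add_cos_sq θ
  have hc1 : c ≤ 1 := Real.cos_le_one θ
  have hi : ρ⁻¹ ≤ ρ := by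
    rw [inv_le_iff_one_le_mul₀ hρ0]; nlinarith
  have hi0 : 0 < ρ⁻¹ := inv_pos.mpr hρ0
  have hRnn : 0 ≤ (1 - 4*a) + 2*a*(ρ + ρ⁻¹) := by nlinarith
  rw [Real.sqrt_le_left hRnn, hre, him]
  have hrr : ρ * ρ⁻¹ = 1 := mul_inv_cancel₀ hρ0.ne'
  have hC : 0 ≤ 1 - 4*a := by linarith
  have hA : 0 ≤ 2*a*(ρ + ρ⁻¹) := by positivity
  have h1c : 0 ≤ 1 - c := by linarith
  have e : (1 - 4*a + 2*a*(ρ+ρ⁻¹))^2 - ((1 - 4*a + 2*a*(ρ+ρ⁻¹)*c)^2 + (2*a*(ρ-ρ⁻¹)*s)^2)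
      = 2*(1-4*a)*(2*a*(ρ+ρ⁻¹))*(1-c) + 16*a^2*s^2 := by
    linear_combination (-(2*a*(ρ+ρ⁻¹))^2) * hcs + 16*a^2*s^2 * hrr
  nlinarith [mul_nonneg (mul_nonneg hC hA) h1c, sq_nonneg (a*s)]
end

section
/- Let Ω be a finite set, m ≥ 1 an integer, ε ∈ [0,1], and let D_0, D_1, …, D_m be probability mass functions on Ω such that TV(D_0, D_i) ≥ 1−ε for every 1 ≤ i ≤ m. Then Σ_{x ∈ Ω : D_0(x) > D_i(x) for all 1 ≤ i ≤ m} D_0(x) ≥ 1 − mε. In particular, a sample x drawn from D_0 satisfies D_0(x) > D_i(x) for all i (so maximum likelihood estimation outputs index 0 regardless of tie-breaking) with probability at least 1−mε. -/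
open Finset

/-- If `D_0, …, D_m` are pmfs on a finite set `Ω` with
`TV(D_0, D_i) ≥ 1 - ε` for all `1 ≤ i ≤ m`, then the `D_0`-mass of the set of points where
`D_0` is strictly larger than every other `D_i` (so MLE outputs index `0` regardless of
tie-breaking) is at least `1 - mε`. -/
theorem stmt_13 {Ω : Type*} [Fintype Ω] (m : ℕ) (hm : 1 ≤ m) (ε : ℝ)
    (hε0 : 0 ≤ ε) (hε1 : ε ≤ 1) (D : Fin (m + 1) → Ω → ℝ)
    (hpos : ∀ i x, 0 ≤ D i x) (hsum : ∀ i, ∑ x, D i x = 1)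
    (hTV : ∀ i : Fin (m + 1), i ≠ 0 → 1 - ε ≤ (1/2) * ∑ x, |D 0 x - D i x|) :
    1 - m * ε ≤
      ∑ x ∈ Finset.univ.filter (fun x : Ω => ∀ i : Fin (m + 1), i ≠ 0 → D i x < D 0 x),
        D 0 x := by
  classical
  -- Step 1: for each i ≠ 0, the D0-mass of the bad set for i is ≤ ε.
  have key : ∀ i : Fin (m+1), i ≠ 0 →
      ∑ x ∈ Finset.univ.filter (fun x => ¬ (D i x < D 0 x)), D 0 x ≤ ε := by
    intro i hi
    have hzero : ∑ x, (D 0 x - D i x) = 0 := by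
      rw [Finset.sum_sub_distrib, hsum, hsum]; ring
    have h1 : ∑ x, max (D 0 x - D i x) 0 = (1/2) * ∑ x, |D 0 x - D i x| := by
      have hpt : ∀ x : Ω, max (D 0 x - D i x) 0 =
          (|D 0 x - D i x| + (D 0 x - D i x)) / 2 := by
        intro x
        rcases le_total (D 0 x - D i x) 0 with h | h
        · rw [max_eq_right h, abs_of_nonpos h]; ring
        · rw [max_eq_left h, abs_of_nonneg h]; ring
      simp_rw [hpt]
      rw [← Finset.sum_div, Finset.sum_add_distrib, hzero]
      ring
    have h2 : ∑ x, max (D 0 x - D i x) 0 ≤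
        ∑ x ∈ Finset.univ.filter (fun x => D i x < D 0 x), D 0 x := by
      rw [← Finset.sum_filter_add_sum_filter_not Finset.univ (fun x => D i x < D 0 x)
        (fun x => max (D 0 x - D i x) 0)]
      have hA : ∑ x ∈ Finset.univ.filter (fun x => D i x < D 0 x), max (D 0 x - D i x) 0 ≤
          ∑ x ∈ Finset.univ.filter (fun x => D i x < D 0 x), D 0 x := by
        apply Finset.sum_le_sum
        intro x _
        have := hpos i x
        have := hpos 0 x
        simp only [max_le_iff]
        constructor <;> linarith
      have hB : ∑ x ∈ Finset.univ.filter (fun x => ¬ (D i x < D 0 x)), max (D 0 x - D i x) 0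
          = 0 := by
        apply Finset.sum_eq_zero
        intro x hx
        simp only [Finset.mem_filter, not_lt] at hx
        rw [max_eq_right]
        linarith [hx.2]
      linarith
    have hsplit : ∑ x ∈ Finset.univ.filter (fun x => D i x < D 0 x), D 0 x +
        ∑ x ∈ Finset.univ.filter (fun x => ¬ (D i x < D 0 x)), D 0 x = 1 := by
      rw [Finset.sum_filter_add_sum_filter_not]
      exact hsum 0
    have := hTV i hi
    linarith
  -- Step 2: union bound.
  set P : Ω → Prop := fun x => ∀ i : Fin (m + 1), i ≠ 0 → D i x < D 0 x with hP
  have hbad : ∑ x ∈ Finset.univ.filter (fun x => ¬ P x), D 0 x ≤ m * ε := by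
    have step1 : ∑ x ∈ Finset.univ.filter (fun x => ¬ P x), D 0 x ≤
        ∑ x ∈ Finset.univ.filter (fun x => ¬ P x),
          ∑ i ∈ Finset.univ.filter (fun i : Fin (m+1) => i ≠ 0),
            (if ¬ (D i x < D 0 x) then D 0 x else 0) := by
      apply Finset.sum_le_sum
      intro x hx
      simp only [Finset.mem_filter, hP] at hx
      push_neg at hx
      obtain ⟨i, hi, hile⟩ := hx.2
      have hmem : i ∈ Finset.univ.filter (fun i : Fin (m+1) => i ≠ 0) := by
        simp [hi]
      calc D 0 x = (if ¬ (D i x < D 0 x) then D 0 x else 0) := by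
            rw [if_pos (not_lt.mpr hile)]
        _ ≤ _ := by
            apply Finset.single_le_sum (f := fun i : Fin (m+1) =>
              (if ¬ (D i x < D 0 x) then D 0 x else 0)) _ hmem
            intro j _
            split_ifs
            · exact le_refl 0
            · exact hpos 0 x
    have step2 : ∑ x ∈ Finset.univ.filter (fun x => ¬ P x),
          ∑ i ∈ Finset.univ.filter (fun i : Fin (m+1) => i ≠ 0),
            (if ¬ (D i x < D 0 x) then D 0 x else 0) ≤
        ∑ i ∈ Finset.univ.filter (fun i : Fin (m+1) => i ≠ 0), ε := by
      rw [Finset.sum_comm]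
      apply Finset.sum_le_sum
      intro i hi
      simp only [Finset.mem_filter] at hi
      calc ∑ x ∈ Finset.univ.filter (fun x => ¬ P x),
            (if ¬ (D i x < D 0 x) then D 0 x else 0)
          ≤ ∑ x, (if ¬ (D i x < D 0 x) then D 0 x else 0) := by
            apply Finset.sum_le_sum_of_subset_of_nonneg (Finset.filter_subset _ _)
            intro x _ _
            split
            · exact hpos 0 x
            · exact le_refl 0
        _ = ∑ x ∈ Finset.univ.filter (fun x => ¬ (D i x < D 0 x)), D 0 x := by
            rw [Finset.sum_filter]
        _ ≤ ε := key i hi.2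
    have hcard : (Finset.univ.filter (fun i : Fin (m+1) => i ≠ 0)).card = m := by
      rw [Finset.filter_ne']
      simp
    calc ∑ x ∈ Finset.univ.filter (fun x => ¬ P x), D 0 x ≤ _ := step1
      _ ≤ _ := step2
      _ = m * ε := by rw [Finset.sum_const, hcard, nsmul_eq_mul]
  have hsplit : ∑ x ∈ Finset.univ.filter (fun x => P x), D 0 x +
      ∑ x ∈ Finset.univ.filter (fun x => ¬ P x), D 0 x = 1 := by
    rw [Finset.sum_filter_add_sum_filter_not]
    exact hsum 0
  show 1 - (m:ℝ) * ε ≤ ∑ x ∈ Finset.univ.filter (fun x => P x), D 0 x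
  linarith
end

section
/- Let m ≥ 2 be an integer, Ω = {1,…,m}, let D_0 be the uniform pmf on Ω (D_0(x) = 1/m for all x), and for 1 ≤ i ≤ m let D_i be the point mass at i (D_i(i) = 1, D_i(x) = 0 for x ≠ i). Then TV(D_0, D_i) = 1 − 1/m for every 1 ≤ i ≤ m, and yet there is no x ∈ Ω with D_0(x) > D_i(x) for all 1 ≤ i ≤ m; consequently the probability that maximum likelihood estimation on a sample from D_0 outputs index 0 is 0. (This shows the factor m loss in the MLE guarantee is in general inevitable.) -/
open Finset

/-- On `Ω = {1,…,m}` (`m ≥ 2`), let `D_0` be uniform and `D_i` the point mass at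
`i`. Then `TV(D_0, D_i) = 1 - 1/m` for every `i`, yet no sample point has `D_0(x) > D_i(x)` for
all `i`; hence MLE on a sample from `D_0` outputs index `0` with probability `0`. -/
theorem stmt_14 (m : ℕ) (hm : 2 ≤ m) :
    (∀ i : Fin m,
      (1/2) * ∑ x : Fin m, |(1 / (m : ℝ)) - (if x = i then 1 else 0)| = 1 - 1 / m) ∧
    ¬ ∃ x : Fin m, ∀ i : Fin m, (if x = i then (1 : ℝ) else 0) < 1 / (m : ℝ) := by
  have hm0 : (0:ℝ) < m := by
    have : 0 < m := lt_of_lt_of_le (by norm_num) hm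
    exact_mod_cast this
  have hmr : (1:ℝ) ≤ m := by exact_mod_cast le_trans (by norm_num) hm
  constructor
  · intro i
    have hsum : ∑ x : Fin m, |(1 / (m : ℝ)) - (if x = i then 1 else 0)|
        = ∑ x : Fin m, (1/(m:ℝ) + (if x = i then 1 - 2/(m:ℝ) else 0)) := by
      apply Finset.sum_congr rfl
      intro x _
      by_cases h : x = i
      · have h1 : (1:ℝ)/m - 1 ≤ 0 := by
          rw [sub_nonpos]; exact div_le_one_of_le₀ hmr (le_of_lt hm0)
        rw [h, if_pos rfl, abs_of_nonpos h1]; simp; ring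
      · have h2 : (0:ℝ) ≤ 1/m := by positivity
        simp [h, abs_of_nonneg h2]
    rw [hsum, Finset.sum_add_distrib, Finset.sum_const,
      Finset.sum_ite_eq' Finset.univ i (fun _ => 1 - 2/(m:ℝ))]
    simp only [Finset.mem_univ, if_true, Finset.card_univ, Fintype.card_fin, nsmul_eq_mul]
    field_simp
    ring
  · rintro ⟨x, hx⟩
    have h1 := hx x
    simp at h1
    have h2 : (1:ℝ)/m ≤ 1 := div_le_one_of_le₀ hmr (le_of_lt hm0)
    rw [one_div] at h2; linarith
end

section
/- Let Ω be a finite set, n ≥ 1 and T ≥ 1 integers, ε ∈ (0,1), and for each s ∈ {0,1}^n let D_s be a probability mass function on Ω. Suppose there is a function A : Ω^T → {0,1}^n such that for every s ∈ {0,1}^n, Σ_{(x_1,…,x_T) : A(x_1,…,x_T) = s} ∏_{i=1}^T D_s(x_i) ≥ 1 − ε/2^{n+1}. Then for every s ∈ {0,1}^n, the probability under T i.i.d. samples (x_1,…,x_T) from D_s that ∏_{i=1}^T D_s(x_i) > ∏_{i=1}^T D_t(x_i) holds for every t ∈ {0,1}^n with t ≠ s is at least 1−ε. In particular, maximum likelihood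 estimation over the family {D_s} with T samples recovers s with probability at least 1−ε regardless of tie-breaking. (This is the key step of Corollary 1.4.) -/
open Finset

lemma sum_biUnion_le_aux {α γ : Type*} [DecidableEq α] (s : Finset γ) (E : γ → Finset α)
    (f : α → ℝ) (hf : ∀ a, 0 ≤ f a) :
    ∑ a ∈ s.biUnion E, f a ≤ ∑ t ∈ s, ∑ a ∈ E t, f a := by
  classical
  induction s using Finset.induction with
  | empty => simp
  | insert t s' h ih =>
    rw [Finset.biUnion_insert, Finset.sum_insert h]
    calc ∑ a ∈ E t ∪ s'.biUnion E, f a ≤ ∑ a ∈ E t, f a + ∑ a ∈ s'.biUnion E, f a := by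
          have := Finset.sum_union_inter (s₁ := E t) (s₂ := s'.biUnion E) (f := f)
          have h2 : 0 ≤ ∑ a ∈ E t ∩ s'.biUnion E, f a := Finset.sum_nonneg fun a _ => hf a
          linarith
      _ ≤ _ := by linarith [ih]

/-- Suppose for each `s ∈ {0,1}^n` we have a pmf `D_s` on a finite set `Ω`, and a
reconstruction function `A : Ω^T → {0,1}^n` succeeds on `T` i.i.d. samples from `D_s` with
probability at least `1 - ε/2^{n+1}`, for every `s`. Then for every `s`, with probability at
least `1 - ε` over `T` i.i.d. samples from `D_s`, the likelihood of `s` strictly exceeds that of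
every `t ≠ s` (so MLE recovers `s` regardless of tie-breaking). -/
theorem stmt_16 {Ω : Type*} [Fintype Ω] (n T : ℕ) (hn : 1 ≤ n) (hT : 1 ≤ T)
    (ε : ℝ) (hε0 : 0 < ε) (hε1 : ε < 1)
    (D : (Fin n → Bool) → Ω → ℝ)
    (hpos : ∀ s x, 0 ≤ D s x) (hsum : ∀ s, ∑ x, D s x = 1)
    (A : (Fin T → Ω) → (Fin n → Bool))
    (hA : ∀ s : Fin n → Bool,
      1 - ε / 2 ^ (n + 1) ≤
        ∑ xs ∈ Finset.univ.filter (fun xs : Fin T → Ω => A xs = s), ∏ i, D s (xs i)) :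
    ∀ s : Fin n → Bool,
      1 - ε ≤
        ∑ xs ∈ Finset.univ.filter (fun xs : Fin T → Ω =>
            ∀ t : Fin n → Bool, t ≠ s → (∏ i, D t (xs i)) < ∏ i, D s (xs i)),
          ∏ i, D s (xs i) := by
  classical
  intro s
  set δ : ℝ := ε / 2 ^ (n + 1) with hδ
  -- total mass of the product measure is 1
  have total : ∀ t : Fin n → Bool, ∑ xs : Fin T → Ω, ∏ i, D t (xs i) = 1 := by
    intro t
    rw [← Fintype.piFinset_univ, ← Finset.prod_univ_sum]
    simp [hsum t]
  have hfnn : ∀ t (xs : Fin T → Ω), 0 ≤ ∏ i, D t (xs i) :=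
    fun t xs => Finset.prod_nonneg fun i _ => hpos t (xs i)
  -- for any t, the D_t-mass of {A ≠ t} is at most δ
  have hbadA : ∀ t : Fin n → Bool,
      ∑ xs ∈ Finset.univ.filter (fun xs : Fin T → Ω => ¬ A xs = t), ∏ i, D t (xs i) ≤ δ := by
    intro t
    have hsplit := Finset.sum_filter_add_sum_filter_not Finset.univ
      (fun xs : Fin T → Ω => A xs = t) (fun xs => ∏ i, D t (xs i))
    rw [total t] at hsplit
    have := hA t
    linarith
  -- for any t ≠ s, the D_s-mass of E_t = {∏ D_s ≤ ∏ D_t} is at most 2δ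
  have key : ∀ t : Fin n → Bool, t ≠ s →
      ∑ xs ∈ Finset.univ.filter
          (fun xs : Fin T → Ω => (∏ i, D s (xs i)) ≤ ∏ i, D t (xs i)),
        ∏ i, D s (xs i) ≤ 2 * δ := by
    intro t hts
    set E := Finset.univ.filter
      (fun xs : Fin T → Ω => (∏ i, D s (xs i)) ≤ ∏ i, D t (xs i)) with hE
    have hsplit := Finset.sum_filter_add_sum_filter_not E
      (fun xs : Fin T → Ω => A xs = t) (fun xs => ∏ i, D s (xs i))
    -- first part: D_s-mass of {A = t} ≤ δ, since {A = s} ⊆ {A ≠ t} carries ≥ 1 - δ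
    have h1 : ∑ xs ∈ E.filter (fun xs => A xs = t), ∏ i, D s (xs i) ≤ δ := by
      have hsub1 : E.filter (fun xs => A xs = t) ⊆
          Finset.univ.filter (fun xs : Fin T → Ω => A xs = t) :=
        Finset.monotone_filter_left _ (Finset.filter_subset _ _)
      have hle1 : ∑ xs ∈ E.filter (fun xs => A xs = t), ∏ i, D s (xs i) ≤
          ∑ xs ∈ Finset.univ.filter (fun xs : Fin T → Ω => A xs = t), ∏ i, D s (xs i) :=
        Finset.sum_le_sum_of_subset_of_nonneg hsub1 (fun xs _ _ => hfnn s xs)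
      have hsub2 : Finset.univ.filter (fun xs : Fin T → Ω => A xs = s) ⊆
          Finset.univ.filter (fun xs : Fin T → Ω => ¬ A xs = t) := by
        intro xs hxs
        simp only [Finset.mem_filter, Finset.mem_univ, true_and] at hxs ⊢
        rw [hxs]; exact fun h => hts h.symm
      have hle2 : ∑ xs ∈ Finset.univ.filter (fun xs : Fin T → Ω => A xs = s), ∏ i, D s (xs i) ≤
          ∑ xs ∈ Finset.univ.filter (fun xs : Fin T → Ω => ¬ A xs = t), ∏ i, D s (xs i) :=
        Finset.sum_le_sum_of_subset_of_nonneg hsub2 (fun xs _ _ => hfnn s xs)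
      have hsplit2 := Finset.sum_filter_add_sum_filter_not Finset.univ
        (fun xs : Fin T → Ω => A xs = t) (fun xs => ∏ i, D s (xs i))
      rw [total s] at hsplit2
      have := hA s
      linarith
    -- second part: on E ∩ {A ≠ t}, ∏ D_s ≤ ∏ D_t, and D_t-mass of {A ≠ t} ≤ δ
    have h2 : ∑ xs ∈ E.filter (fun xs => ¬ A xs = t), ∏ i, D s (xs i) ≤ δ := by
      have step1 : ∑ xs ∈ E.filter (fun xs => ¬ A xs = t), ∏ i, D s (xs i) ≤
          ∑ xs ∈ E.filter (fun xs => ¬ A xs = t), ∏ i, D t (xs i) := by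
        apply Finset.sum_le_sum
        intro xs hxs
        have : xs ∈ E := Finset.mem_of_mem_filter _ hxs
        rw [hE, Finset.mem_filter] at this
        exact this.2
      have hsub : E.filter (fun xs => ¬ A xs = t) ⊆
          Finset.univ.filter (fun xs : Fin T → Ω => ¬ A xs = t) :=
        Finset.monotone_filter_left _ (Finset.filter_subset _ _)
      have step2 : ∑ xs ∈ E.filter (fun xs => ¬ A xs = t), ∏ i, D t (xs i) ≤
          ∑ xs ∈ Finset.univ.filter (fun xs : Fin T → Ω => ¬ A xs = t), ∏ i, D t (xs i) :=
        Finset.sum_le_sum_of_subset_of_nonneg hsub (fun xs _ _ => hfnn t xs)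
      have := hbadA t
      linarith
    linarith
  -- union bound over t ≠ s
  have hsplitG := Finset.sum_filter_add_sum_filter_not Finset.univ
    (fun xs : Fin T → Ω => ∀ t : Fin n → Bool, t ≠ s → (∏ i, D t (xs i)) < ∏ i, D s (xs i))
    (fun xs => ∏ i, D s (xs i))
  rw [total s] at hsplitG
  have hbadsub : Finset.univ.filter
      (fun xs : Fin T → Ω => ¬ ∀ t : Fin n → Bool, t ≠ s → (∏ i, D t (xs i)) < ∏ i, D s (xs i)) ⊆
      (Finset.univ.filter (fun t : Fin n → Bool => t ≠ s)).biUnion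
        (fun t => Finset.univ.filter
          (fun xs : Fin T → Ω => (∏ i, D s (xs i)) ≤ ∏ i, D t (xs i))) := by
    intro xs hxs
    simp only [Finset.mem_filter, Finset.mem_univ, true_and] at hxs
    push_neg at hxs
    obtain ⟨t, hts, hle⟩ := hxs
    simp only [Finset.mem_biUnion, Finset.mem_filter, Finset.mem_univ, true_and]
    exact ⟨t, hts, hle⟩
  have hbad : ∑ xs ∈ Finset.univ.filter
      (fun xs : Fin T → Ω => ¬ ∀ t : Fin n → Bool, t ≠ s → (∏ i, D t (xs i)) < ∏ i, D s (xs i)),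
      ∏ i, D s (xs i) ≤ ε := by
    calc ∑ xs ∈ Finset.univ.filter
          (fun xs : Fin T → Ω => ¬ ∀ t : Fin n → Bool, t ≠ s →
            (∏ i, D t (xs i)) < ∏ i, D s (xs i)), ∏ i, D s (xs i)
        ≤ ∑ xs ∈ (Finset.univ.filter (fun t : Fin n → Bool => t ≠ s)).biUnion
            (fun t => Finset.univ.filter
              (fun xs : Fin T → Ω => (∏ i, D s (xs i)) ≤ ∏ i, D t (xs i))),
            ∏ i, D s (xs i) :=
          Finset.sum_le_sum_of_subset_of_nonneg hbadsub (fun xs _ _ => hfnn s xs)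
      _ ≤ ∑ t ∈ Finset.univ.filter (fun t : Fin n → Bool => t ≠ s),
            ∑ xs ∈ Finset.univ.filter
              (fun xs : Fin T → Ω => (∏ i, D s (xs i)) ≤ ∏ i, D t (xs i)),
              ∏ i, D s (xs i) :=
          sum_biUnion_le_aux _ _ _ (fun xs => hfnn s xs)
      _ ≤ ∑ _t ∈ Finset.univ.filter (fun t : Fin n → Bool => t ≠ s), 2 * δ := by
          apply Finset.sum_le_sum
          intro t ht
          simp only [Finset.mem_filter, Finset.mem_univ, true_and] at ht
          exact key t ht
      _ = (Finset.univ.filter (fun t : Fin n → Bool => t ≠ s)).card * (2 * δ) := by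
          rw [Finset.sum_const, nsmul_eq_mul]
      _ ≤ (2 ^ n : ℝ) * (2 * δ) := by
          apply mul_le_mul_of_nonneg_right
          · have hcard : (Finset.univ.filter (fun t : Fin n → Bool => t ≠ s)).card ≤ 2 ^ n := by
              calc (Finset.univ.filter (fun t : Fin n → Bool => t ≠ s)).card
                  ≤ (Finset.univ : Finset (Fin n → Bool)).card :=
                    Finset.card_le_card (Finset.filter_subset _ _)
                _ = 2 ^ n := by simp [Finset.card_univ]
            exact_mod_cast hcard
          · positivity
      _ = ε := by
          rw [hδ]
          have h2 : (2 : ℝ) ^ (n + 1) = 2 ^ n * 2 := by ring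
          field_simp [h2]
          ring
  linarith
end

section
/- For every integer n ≥ 4, set t := ⌊n/4⌋ and m := C(n,t) (the binomial coefficient). There exist a finite set Ω with |Ω| = m + n and probability mass functions D_0, D_1, …, D_m on Ω such that: (1) there exists a function A : Ω → {0,1,…,m} with Σ_{x : A(x)=j} D_j(x) ≥ 2/3 for every 0 ≤ j ≤ m; and (2) with T := t, for every tuple (x_1,…,x_T) ∈ Ω^T in the support of the T-fold product of D_0 (i.e., with ∏_{i=1}^T D_0(x_i) > 0) there exists 1 ≤ j ≤ m with ∏_{i=1}^T D_j(x_i) > ∏_{i=1}^T D_0(x_i). Consequently, maximum likelihood estimation on T i.i.d. samples from D_0 outputs index 0 with probability 0, even though one sample suffices to identify the distribution with probability 2/3. -/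
open Finset

/-- For every `n ≥ 4`, with `t = ⌊n/4⌋`, `m = C(n,t)`, there are pmfs
`D_0, …, D_m` on a set `Ω` of size `m + n` such that (1) some distinguisher
`A : Ω → {0,…,m}` identifies the source distribution from one sample with probability `≥ 2/3`,
yet (2) on every tuple in the support of `D_0^{⊗t}` some `D_j`, `j ≠ 0`, has strictly larger
likelihood; hence MLE with `T = t` samples from `D_0` outputs index `0` with probability `0`. -/
theorem stmt_17 (n : ℕ) (hn : 4 ≤ n) :
    ∃ D : Fin (Nat.choose n (n / 4) + 1) → Fin (Nat.choose n (n / 4) + n) → ℝ,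
      (∀ j x, 0 ≤ D j x) ∧ (∀ j, ∑ x, D j x = 1) ∧
      (∃ A : Fin (Nat.choose n (n / 4) + n) → Fin (Nat.choose n (n / 4) + 1),
        ∀ j, (2 : ℝ)/3 ≤ ∑ x ∈ Finset.univ.filter (fun x => A x = j), D j x) ∧
      (∀ xs : Fin (n / 4) → Fin (Nat.choose n (n / 4) + n),
        0 < ∏ i, D 0 (xs i) →
          ∃ j : Fin (Nat.choose n (n / 4) + 1), j ≠ 0 ∧
            (∏ i, D 0 (xs i)) < ∏ i, D j (xs i)) := by
  set t := n / 4 with ht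
  set m := Nat.choose n t with hm
  have ht1 : 1 ≤ t := by omega
  have h4t : 4 * t ≤ n := by omega
  have h3t : 3 * t < n := by omega
  have htn : t ≤ n := by omega
  have hm1 : 1 ≤ m := Nat.choose_pos htn
  have hn0 : (0:ℝ) < n := by positivity
  have ht0 : (0:ℝ) < 3 * t := by positivity
  -- enumeration of t-subsets of range n
  set P : Finset (Finset ℕ) := Finset.powersetCard t (Finset.range n) with hP
  have hPcard : P.card = m := by
    simp [hP, Finset.card_powersetCard, hm]
  set e : ℕ → Finset ℕ := fun k => if h : k < P.card then (P.equivFin.symm ⟨k, h⟩ : Finset ℕ) else ∅ with he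
  have hecard : ∀ k, k < m → (e k).card = t ∧ e k ⊆ Finset.range n := by
    intro k hk
    rw [← hPcard] at hk
    have hmem : e k ∈ P := by
      simp only [he, dif_pos hk]
      exact (P.equivFin.symm ⟨k, hk⟩).2
    rw [hP, Finset.mem_powersetCard] at hmem
    exact ⟨hmem.2, hmem.1⟩
  have hsurj : ∀ S ∈ P, ∃ k, k < m ∧ e k = S := by
    intro S hS
    refine ⟨(P.equivFin ⟨S, hS⟩).val, hPcard ▸ (P.equivFin ⟨S, hS⟩).isLt, ?_⟩
    simp [he, dif_pos (P.equivFin ⟨S, hS⟩).isLt]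
  -- the distributions
  set D : Fin (m + 1) → Fin (m + n) → ℝ := fun j x =>
    if j.val = 0 then (if m ≤ x.val then (n : ℝ)⁻¹ else 0)
    else if x.val + 1 = j.val then 2/3
    else if x.val - m ∈ e (j.val - 1) ∧ m ≤ x.val then (3 * (t : ℝ))⁻¹ else 0 with hD
  have hDnonneg : ∀ j x, 0 ≤ D j x := by
    intro j x
    rw [hD]
    dsimp only
    split_ifs <;> positivity
  -- values of D
  have hD0light : ∀ x : Fin (m + n), m ≤ x.val → D 0 x = (n:ℝ)⁻¹ := by
    intro x hx; simp [hD, hx]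
  have hD0heavy : ∀ x : Fin (m + n), x.val < m → D 0 x = 0 := by
    intro x hx; simp [hD]; omega
  have hDjheavy : ∀ (j : Fin (m+1)) (x : Fin (m + n)), j.val ≠ 0 → x.val + 1 = j.val →
      D j x = 2/3 := by
    intro j x hj hx; simp [hD, hj, hx, show j ≠ 0 from fun h => hj (by simp [h])]
  have hDjlightin : ∀ (j : Fin (m+1)) (x : Fin (m + n)), j.val ≠ 0 → m ≤ x.val →
      x.val - m ∈ e (j.val - 1) → D j x = (3 * (t : ℝ))⁻¹ := by
    intro j x hj hx hmem
    have hxj : ¬ (x.val + 1 = j.val) := by omega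
    simp [hD, hj, hxj, hx, hmem, show j ≠ 0 from fun h => hj (by simp [h])]
  have hDjlightout : ∀ (j : Fin (m+1)) (x : Fin (m + n)), j.val ≠ 0 → m ≤ x.val →
      x.val - m ∉ e (j.val - 1) → D j x = 0 := by
    intro j x hj hx hmem
    have hxj : ¬ (x.val + 1 = j.val) := by omega
    simp [hD, hj, hxj, hmem, show j ≠ 0 from fun h => hj (by simp [h])]
  refine ⟨D, hDnonneg, ?_, ?_, ?_⟩
  · -- sums to 1
    intro j
    rw [Fin.sum_univ_add (f := fun x : Fin (m + n) => D j x)]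
    by_cases hj : j.val = 0
    · have hj0 : j = 0 := Fin.ext hj
      subst hj0
      have h1 : ∀ i : Fin m, D 0 (Fin.castAdd n i) = 0 := fun i =>
        hD0heavy _ (by simpa using i.isLt)
      have h2 : ∀ i : Fin n, D 0 (Fin.natAdd m i) = (n:ℝ)⁻¹ := fun i =>
        hD0light _ (by simp [Fin.coe_natAdd])
      simp only [h1, h2, Finset.sum_const_zero, Finset.sum_const, Finset.card_univ,
        Fintype.card_fin, nsmul_eq_mul, zero_add]
      field_simp
    · have hjv1 : 1 ≤ j.val := by omega
      have hjv2 : j.val ≤ m := by omega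
      have hk : j.val - 1 < m := by omega
      obtain ⟨hkcard, hksub⟩ := hecard (j.val - 1) hk
      have h1 : ∑ i : Fin m, D j (Fin.castAdd n i) = 2/3 := by
        have step : ∀ i : Fin m, D j (Fin.castAdd n i)
            = if i = (⟨j.val - 1, hk⟩ : Fin m) then (2:ℝ)/3 else 0 := by
          intro i
          by_cases hi : i = (⟨j.val - 1, hk⟩ : Fin m)
          · rw [if_pos hi, hDjheavy j _ hj]
            rw [Fin.coe_castAdd, hi]
            simp only [Fin.val_mk]
            omega
          · rw [if_neg hi]
            have hne : (Fin.castAdd n i).val + 1 ≠ j.val := by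
              rw [Fin.coe_castAdd]
              intro hcon
              exact hi (Fin.ext (by simp only [Fin.val_mk]; omega))
            have hlight : ¬ (m ≤ (Fin.castAdd n i).val) := by
              rw [Fin.coe_castAdd]; exact by omega
            have hne' : (i:ℕ) + 1 ≠ j.val := by simpa using hne
            have hil : ¬ m ≤ (i:ℕ) := by have := i.isLt; omega
            simp [hD, hj, hne', hil]
        rw [Finset.sum_congr rfl (fun i _ => step i), Finset.sum_ite_eq' Finset.univ]
        simp
      have h2 : ∑ i : Fin n, D j (Fin.natAdd m i) = 1/3 := by
        have step : ∀ i : Fin n, D j (Fin.natAdd m i)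
            = if i.val ∈ e (j.val - 1) then (3 * (t : ℝ))⁻¹ else 0 := by
          intro i
          by_cases hi : i.val ∈ e (j.val - 1)
          · rw [if_pos hi, hDjlightin j _ hj (by simp [Fin.coe_natAdd])]
            simpa [Fin.coe_natAdd] using hi
          · rw [if_neg hi, hDjlightout j _ hj (by simp [Fin.coe_natAdd])]
            simpa [Fin.coe_natAdd] using hi
        rw [Finset.sum_congr rfl (fun i _ => step i), ← Finset.sum_filter]
        have hfc : (Finset.univ.filter (fun i : Fin n => i.val ∈ e (j.val - 1))).card = t := by
          have hbound : ∀ a ∈ e (j.val - 1), a < n := fun a ha =>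
            Finset.mem_range.mp (hksub ha)
          have : Finset.univ.filter (fun i : Fin n => i.val ∈ e (j.val - 1))
              = (e (j.val - 1)).attachFin hbound := by
            ext a
            simp [Finset.mem_attachFin]
          rw [this, Finset.card_attachFin, hkcard]
        rw [Finset.sum_const, hfc, nsmul_eq_mul]
        field_simp
      rw [h1, h2]; norm_num
  · -- distinguisher
    refine ⟨fun x => if h : x.val < m then ⟨x.val + 1, by omega⟩ else 0, ?_⟩
    intro j
    rw [Finset.sum_filter]
    by_cases hj : j.val = 0
    · have hj0 : j = 0 := Fin.ext hj
      subst hj0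
      rw [Fin.sum_univ_add (f := fun x : Fin (m + n) =>
        if (if h : x.val < m then (⟨x.val + 1, by omega⟩ : Fin (m+1)) else 0) = 0
        then D 0 x else 0)]
      have h1 : ∀ i : Fin m, (if (if h : (Fin.castAdd n i).val < m
          then (⟨(Fin.castAdd n i).val + 1, by omega⟩ : Fin (m+1)) else 0) = 0
          then D 0 (Fin.castAdd n i) else 0) = 0 := by
        intro i
        rw [dif_pos (by simpa using i.isLt), if_neg]
        simp [Fin.ext_iff]
      have h2 : ∀ i : Fin n, (if (if h : (Fin.natAdd m i).val < m
          then (⟨(Fin.natAdd m i).val + 1, by omega⟩ : Fin (m+1)) else 0) = 0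
          then D 0 (Fin.natAdd m i) else 0) = (n:ℝ)⁻¹ := by
        intro i
        rw [dif_neg (by simp only [Fin.coe_natAdd]; omega), if_pos rfl]
        exact hD0light _ (by simp [Fin.coe_natAdd])
      simp only [h1, h2, Finset.sum_const_zero, Finset.sum_const, Finset.card_univ,
        Fintype.card_fin, nsmul_eq_mul, zero_add]
      rw [mul_inv_cancel₀ (ne_of_gt hn0)]
      norm_num
    · have hk : j.val - 1 < m := by omega
      set x0 : Fin (m + n) := Fin.castAdd n (⟨j.val - 1, hk⟩ : Fin m) with hx0
      have hx0v : x0.val = j.val - 1 := by simp [hx0, Fin.coe_castAdd]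
      have hterm : (if (if h : x0.val < m then (⟨x0.val + 1, by omega⟩ : Fin (m+1)) else 0) = j
          then D j x0 else 0) = 2/3 := by
        rw [dif_pos (by omega), if_pos (by apply Fin.ext; simp only [Fin.val_mk]; omega)]
        exact hDjheavy j x0 hj (by omega)
      calc (2:ℝ)/3 = _ := hterm.symm
        _ ≤ _ := by
            apply Finset.single_le_sum (f := fun x : Fin (m+n) =>
              if (if h : x.val < m then (⟨x.val + 1, by omega⟩ : Fin (m+1)) else 0) = j
              then D j x else 0) _ (Finset.mem_univ x0)
            intro x _
            split_ifs
            all_goals first | exact hDnonneg j x | exact le_refl 0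
  · -- MLE part
    intro xs hpos
    have hlight : ∀ i, m ≤ (xs i).val := by
      intro i
      by_contra hcon
      push_neg at hcon
      have h0 : D 0 (xs i) = 0 := hD0heavy _ hcon
      have hz : (∏ i, D 0 (xs i)) = 0 :=
        Finset.prod_eq_zero (f := fun i => D 0 (xs i)) (Finset.mem_univ i) h0
      rw [hz] at hpos
      exact lt_irrefl 0 hpos
    set V : Finset ℕ := Finset.image (fun i => (xs i).val - m) Finset.univ with hV
    have hVsub : V ⊆ Finset.range n := by
      intro a ha
      rw [hV, Finset.mem_image] at ha
      obtain ⟨i, _, rfl⟩ := ha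
      have := (xs i).isLt
      rw [Finset.mem_range]
      omega
    have hVcard : V.card ≤ t := le_trans (Finset.card_image_le) (by simp)
    obtain ⟨S, hVS, hSsub, hScard⟩ := Finset.exists_subsuperset_card_eq hVsub hVcard
      (by rw [Finset.card_range]; exact htn)
    have hSP : S ∈ P := by rw [hP, Finset.mem_powersetCard]; exact ⟨hSsub, hScard⟩
    obtain ⟨k, hkm, hek⟩ := hsurj S hSP
    refine ⟨⟨k + 1, by omega⟩, by simp [Fin.ext_iff], ?_⟩
    have hDj : ∀ i, D ⟨k + 1, by omega⟩ (xs i) = (3 * (t : ℝ))⁻¹ := by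
      intro i
      apply hDjlightin _ _ (by simp) (hlight i)
      simp only [Nat.add_sub_cancel]
      rw [hek]
      exact hVS (by rw [hV]; exact Finset.mem_image_of_mem _ (Finset.mem_univ i))
    have hD0 : ∀ i, D 0 (xs i) = (n:ℝ)⁻¹ := fun i => hD0light _ (hlight i)
    calc ∏ i, D 0 (xs i) = ∏ i : Fin t, (n:ℝ)⁻¹ := by
          exact Finset.prod_congr rfl (fun i _ => hD0 i)
      _ < ∏ i : Fin t, (3 * (t : ℝ))⁻¹ := by
          apply Finset.prod_lt_prod_of_nonempty
          · intro i _; positivity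
          · intro i _
            apply inv_strictAnti₀ ht0
            exact_mod_cast h3t
          · exact ⟨⟨0, by omega⟩, Finset.mem_univ _⟩
      _ = ∏ i, D ⟨k + 1, by omega⟩ (xs i) :=
          (Finset.prod_congr rfl (fun i _ => (hDj i))).symm
end

section
/- Fix a deletion probability p ∈ [0,1). There exists a constant C > 0 depending only on p such that: for all integers n ≥ k ≥ 1 and all strings x, y ∈ {0,1}^n whose length-k prefixes differ (x_i ≠ y_i for some 0 ≤ i ≤ k−1), setting w := (x_0,…,x_{k−1}) ∈ {0,1}^k, there exists z ∈ ℂ with |z| ≤ 1 such that |P_{w,x}(z) − P_{w,y}(z)| ≥ C. -/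
open Finset

open Real in
lemma abs_near (p : ℝ) (hp0 : 0 ≤ p) (hp1 : p < 1) (N : ℝ) (hNR : 0 < N)
    (hNp : π * p ≤ N * (1 - p)) (θ : ℝ) (hcos : 1 - (π / N) ^ 2 / 2 ≤ Real.cos θ) :
    ‖(p:ℂ) * Complex.exp ((θ:ℝ) * Complex.I) - (p:ℂ)‖ ≤ 1 - p := by
  have h1p : (0:ℝ) < 1 - p := by linarith
  have hπ : (0:ℝ) < π := Real.pi_pos
  have key2 : ‖(p:ℂ) * Complex.exp ((θ:ℝ) * Complex.I) - (p:ℂ)‖ ^ 2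
      = p^2 * (2 - 2 * Real.cos θ) := by
    have hfac : (p:ℂ) * Complex.exp ((θ:ℝ) * Complex.I) - (p:ℂ)
        = (p:ℂ) * (Complex.exp (((θ:ℝ):ℂ) * Complex.I) - 1) := by ring
    rw [hfac, norm_mul, mul_pow, Complex.norm_real, Real.norm_eq_abs, abs_of_nonneg hp0]
    have hexp1 : Complex.exp (((θ:ℝ):ℂ) * Complex.I) - 1
        = ((Real.cos θ - 1 : ℝ) : ℂ) + ((Real.sin θ : ℝ) : ℂ) * Complex.I := by
      rw [Complex.exp_mul_I]
      push_cast [Complex.ofReal_cos, Complex.ofReal_sin]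
      ring
    rw [hexp1, Complex.sq_norm, Complex.normSq_add_mul_I, Real.sin_sq]
    ring
  have h3 : p^2 * (2 - 2 * Real.cos θ) ≤ (p * π / N)^2 := by
    have h5 : 2 - 2 * Real.cos θ ≤ (π / N)^2 := by linarith
    have h6 : 0 ≤ 2 - 2 * Real.cos θ := by nlinarith [Real.cos_le_one θ]
    have h7 : p^2 * (2 - 2 * Real.cos θ) ≤ p^2 * (π/N)^2 := by nlinarith [sq_nonneg p]
    calc p^2 * (2 - 2*Real.cos θ) ≤ p^2 * (π/N)^2 := h7
      _ = (p * π / N)^2 := by ring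
  have h4 : (p * π / N)^2 ≤ (1-p)^2 := by
    have h8 : p * π / N ≤ 1 - p := by
      rw [div_le_iff₀ hNR]
      nlinarith
    have h9 : 0 ≤ p * π / N := by positivity
    nlinarith
  nlinarith [norm_nonneg ((p:ℂ) * Complex.exp ((θ:ℝ) * Complex.I) - (p:ℂ)),
    key2, h3, h4, h1p]

open Real in
/-- The key analytic lemma: a polynomial with coefficients bounded by 1 in absolute value
and constant coefficient 1 has modulus at least a constant (depending only on `p`)
somewhere on the disk `|q - p| ≤ 1 - p`. -/
lemma key_poly (p : ℝ) (hp0 : 0 ≤ p) (hp1 : p < 1) (m : ℕ) (hm : 0 < m) (a : ℕ → ℝ)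
    (ha : ∀ j, |a j| ≤ 1) (ha0 : a 0 = 1) :
    ∃ q : ℂ, ‖q - (p : ℂ)‖ ≤ 1 - p ∧
      (1 - p) ^ ⌈π * p / (1 - p)⌉₊ ≤
        ‖∑ j ∈ Finset.range m, (a j : ℂ) * q ^ j‖ := by
  have h1p : (0:ℝ) < 1 - p := by linarith
  set g : ℂ → ℂ := fun q => ∑ j ∈ Finset.range m, (a j : ℂ) * q ^ j with hgdef
  have hg0 : g 0 = 1 := by
    simp only [hgdef]
    rw [Finset.sum_eq_single 0]
    · simp [ha0]
    · intro j _ hj0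
      simp [zero_pow hj0]
    · intro h0; exact absurd (Finset.mem_range.2 hm) h0
  have hgb : ∀ q : ℂ, ‖q‖ ≤ p → ‖g q‖ ≤ (1 - p)⁻¹ := by
    intro q hq
    have h1 : ‖g q‖ ≤ ∑ j ∈ Finset.range m, p ^ j := by
      calc ‖g q‖ ≤ ∑ j ∈ Finset.range m, ‖(a j : ℂ) * q ^ j‖ :=
            norm_sum_le _ _
        _ ≤ ∑ j ∈ Finset.range m, p ^ j := by
            refine Finset.sum_le_sum fun j _ => ?_
            rw [norm_mul, norm_pow]
            have h2 : ‖(a j : ℂ)‖ ≤ 1 := by rw [Complex.norm_real, Real.norm_eq_abs]; exact ha j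
            have h3 : ‖q‖ ^ j ≤ p ^ j := pow_le_pow_left₀ (norm_nonneg q) hq j
            calc ‖((a j : ℝ) : ℂ)‖ * ‖q‖ ^ j ≤ 1 * p ^ j :=
                  mul_le_mul h2 h3 (by positivity) one_pos.le
              _ = p ^ j := one_mul _
    refine h1.trans ?_
    rw [geom_sum_eq hp1.ne]
    have heq : (p ^ m - 1) / (p - 1) = (1 - p ^ m) / (1 - p) := by
      rw [← neg_div_neg_eq]; ring_nf
    rw [heq, inv_eq_one_div]
    have hpm : 0 ≤ p ^ m := pow_nonneg hp0 m
    gcongr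
    linarith
  have hgd : Differentiable ℂ g := by
    simp only [hgdef]
    exact Differentiable.fun_sum fun j _ => (differentiable_pow j).const_mul _
  set N : ℕ := ⌈π * p / (1 - p)⌉₊ + 1 with hNdef
  have hNpos : 0 < N := Nat.succ_pos _
  have hNR : (0:ℝ) < N := by exact_mod_cast hNpos
  have hπ : (0:ℝ) < π := Real.pi_pos
  have hNp : π * p ≤ N * (1 - p) := by
    have h1 : π * p / (1 - p) ≤ (N : ℝ) := by
      refine (Nat.le_ceil _).trans ?_
      exact_mod_cast Nat.le_succ _
    calc π * p = (π * p / (1 - p)) * (1 - p) := by field_simp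
      _ ≤ N * (1 - p) := by nlinarith
  set c : ℕ → ℂ := fun i => Complex.exp ((2 * π * i / N : ℝ) * Complex.I) with hcdef
  have hc1 : ∀ i, ‖c i‖ = 1 := fun i => Complex.norm_exp_ofReal_mul_I _
  set h : ℂ → ℂ := fun q => ∏ i ∈ Finset.range N, g (c i * q) with hhdef
  have hh0 : h 0 = 1 := by simp [hhdef, hg0]
  have hhd : Differentiable ℂ h :=
    Differentiable.fun_finset_prod fun i _ => hgd.comp (differentiable_id.const_mul _)
  obtain ⟨q₀, hq₀p, hq₀⟩ : ∃ q₀ : ℂ, ‖q₀‖ = p ∧ 1 ≤ ‖h q₀‖ := by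
    rcases eq_or_lt_of_le hp0 with hp | hp
    · exact ⟨0, by simp [← hp], by simp [hh0]⟩
    · have hsne : (Metric.sphere (0:ℂ) p).Nonempty := NormedSpace.sphere_nonempty.mpr hp0
      obtain ⟨q₀, hq₀mem, hmax⟩ :=
        (isCompact_sphere (0:ℂ) p).exists_isMaxOn hsne
          (continuous_norm.comp hhd.continuous).continuousOn
      refine ⟨q₀, by simpa using (mem_sphere_zero_iff_norm.mp hq₀mem), ?_⟩
      have hle : ‖h 0‖ ≤ ‖h q₀‖ := by
        refine Complex.norm_le_of_forall_mem_frontier_norm_le (U := Metric.ball (0:ℂ) p) Metric.isBounded_ball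
          hhd.diffContOnCl ?_ ?_
        · intro z hz
          rw [frontier_ball (0:ℂ) hp.ne'] at hz
          exact hmax hz
        · rw [closure_ball (0:ℂ) hp.ne']
          exact Metric.mem_closedBall_self hp.le
      simpa [hh0] using hle
  have hq₀prod : 1 ≤ ∏ i ∈ Finset.range N, ‖g (c i * q₀)‖ := by
    calc (1:ℝ) ≤ ‖h q₀‖ := hq₀
      _ = _ := norm_prod _ _
  clear hq₀ hh0 hhd hhdef
  clear_value h
  clear h
  set α := Complex.arg q₀ with hα
  have hq₀eq : q₀ = (p : ℂ) * Complex.exp ((α : ℝ) * Complex.I) := by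
    rw [hα, ← hq₀p]
    exact (Complex.norm_mul_exp_arg_mul_I q₀).symm
  set u : ℝ := -α * N / (2 * π) with hu
  set r : ℤ := round u with hr
  set j : ℕ := (r % N).toNat with hj
  have hNZ : (0:ℤ) < (N:ℤ) := by exact_mod_cast hNpos
  have hjN : j < N := by
    have h1 : r % (N:ℤ) < (N:ℤ) := Int.emod_lt_of_pos r hNZ
    have h2 : (0:ℤ) ≤ r % (N:ℤ) := Int.emod_nonneg r hNZ.ne'
    omega
  have hjr : (j : ℤ) = r % N := Int.toNat_of_nonneg (Int.emod_nonneg r hNZ.ne')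
  set θ : ℝ := α + 2 * π * j / N with hθ
  have hcos : 1 - (π / N) ^ 2 / 2 ≤ Real.cos θ := by
    have hjr2 : (j:ℤ) = r - N * (r / N) := by rw [hjr, Int.emod_def]
    have hjr3 : (j:ℝ) = (r:ℝ) - (N:ℝ) * ((r / N : ℤ) : ℝ) := by exact_mod_cast hjr2
    have hcoseq : Real.cos θ = Real.cos (α + 2 * π * r / N) := by
      have hθ2 : θ = (α + 2 * π * r / N) + (-(r / N) : ℤ) * (2 * π) := by
        rw [hθ, hjr3]
        push_cast
        field_simp
        ring
      rw [hθ2, Real.cos_add_int_mul_two_pi]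
    have hαu : α = -(2 * π * u / N) := by rw [hu]; field_simp
    have harg : α + 2 * π * r / N = (2 * π / N) * ((r:ℝ) - u) := by rw [hαu]; ring
    have hru : |(r:ℝ) - u| ≤ 1/2 := by
      rw [hr, abs_sub_comm]
      exact abs_sub_round u
    have habs : |α + 2 * π * r / N| ≤ π / N := by
      rw [harg, abs_mul, abs_of_pos (show (0:ℝ) < 2 * π / N by positivity)]
      calc 2 * π / N * |(r:ℝ) - u| ≤ 2 * π / N * (1/2) :=
            mul_le_mul_of_nonneg_left hru (by positivity)
        _ = π / N := by ring
    have hsq : (α + 2 * π * r / N) ^ 2 ≤ (π / N) ^ 2 := by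
      have h2 := abs_le.mp habs
      nlinarith [h2.1, h2.2]
    calc 1 - (π / N) ^ 2 / 2 ≤ 1 - (α + 2 * π * r / N) ^ 2 / 2 := by linarith
      _ ≤ Real.cos (α + 2 * π * r / N) := Real.one_sub_sq_div_two_le_cos
      _ = Real.cos θ := hcoseq.symm
  set q := c j * q₀ with hq
  have hqabs : ‖q‖ = p := by rw [hq, norm_mul, hc1, one_mul, hq₀p]
  have hqexp : q = (p:ℂ) * Complex.exp ((θ:ℝ) * Complex.I) := by
    have hsplit : ((θ:ℝ):ℂ) = ((2*π*(j:ℝ)/(N:ℝ) : ℝ):ℂ) + ((α:ℝ):ℂ) := by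
      push_cast [hθ]; ring
    simp only [hq, hq₀eq, hcdef]
    rw [hsplit, add_mul, Complex.exp_add]
    push_cast
    ring
  clear hθ
  clear_value θ q
  clear hα hq₀eq hu hr hjr hj
  clear_value α u r j
  clear r u α
  clear hcdef
  clear_value c N
  have hqnear : ‖q - (p:ℂ)‖ ≤ 1 - p := by
    rw [hqexp]
    exact abs_near p hp0 hp1 N hNR hNp θ hcos
  refine ⟨q, hqnear, ?_⟩
  have hprod : 1 ≤ ‖g q‖ * ((1-p)⁻¹) ^ (N - 1) := by
    have hjmem : j ∈ Finset.range N := Finset.mem_range.mpr hjN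
    have h2 : ∏ i ∈ Finset.range N, ‖g (c i * q₀)‖
        = ‖g q‖ * ∏ i ∈ (Finset.range N).erase j, ‖g (c i * q₀)‖ := by
      rw [← Finset.mul_prod_erase _ _ hjmem, ← hq]
    have h3 : ∏ i ∈ (Finset.range N).erase j, ‖g (c i * q₀)‖ ≤ ((1-p)⁻¹) ^ (N-1) := by
      have hcard : ((Finset.range N).erase j).card = N - 1 := by
        rw [Finset.card_erase_of_mem hjmem, Finset.card_range]
      calc ∏ i ∈ (Finset.range N).erase j, ‖g (c i * q₀)‖
          ≤ ∏ _i ∈ (Finset.range N).erase j, (1-p)⁻¹ := by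
            refine Finset.prod_le_prod (fun i _ => norm_nonneg _) (fun i _ => ?_)
            exact hgb _ (by rw [norm_mul, hc1, one_mul, hq₀p])
        _ = ((1-p)⁻¹) ^ (N-1) := by rw [Finset.prod_const, hcard]
    calc (1:ℝ) ≤ ∏ i ∈ Finset.range N, ‖g (c i * q₀)‖ := hq₀prod
      _ = ‖g q‖ * ∏ i ∈ (Finset.range N).erase j, ‖g (c i * q₀)‖ := h2
      _ ≤ ‖g q‖ * ((1-p)⁻¹)^(N-1) :=
            mul_le_mul_of_nonneg_left h3 (norm_nonneg _)
  have hNm1 : N - 1 = ⌈π * p / (1 - p)⌉₊ := by omega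
  have hpow : (0:ℝ) < (1-p)^(N-1) := pow_pos h1p _
  have hfin : (1-p)^(N-1) ≤ ‖g q‖ := by
    calc (1-p)^(N-1) = 1 * (1-p)^(N-1) := (one_mul _).symm
      _ ≤ (‖g q‖ * ((1-p)⁻¹)^(N-1)) * (1-p)^(N-1) :=
          mul_le_mul_of_nonneg_right hprod hpow.le
      _ = ‖g q‖ := by
          rw [mul_assoc, ← mul_pow, inv_mul_cancel₀ h1p.ne', one_pow, mul_one]
  rw [← hNm1]
  exact hfin


/-- Fix `p ∈ [0,1)`. There is a constant `C > 0` depending only on `p` such that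
for all `1 ≤ k ≤ n` and all `x, y ∈ {0,1}^n` whose length-`k` prefixes differ, taking
`w = x[0:k-1]`, there is a point `z` in the closed unit disk with
`|P_{w,x}(z) - P_{w,y}(z)| ≥ C`. -/
theorem stmt_19 (p : ℝ) (hp0 : 0 ≤ p) (hp1 : p < 1) :
    ∃ C : ℝ, 0 < C ∧ ∀ n k : ℕ, 1 ≤ k → ∀ hkn : k ≤ n,
      ∀ x y : Fin n → Bool,
        (∃ i : ℕ, ∃ h : i < k, x ⟨i, h.trans_le hkn⟩ ≠ y ⟨i, h.trans_le hkn⟩) →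
        ∃ z : ℂ, ‖z‖ ≤ 1 ∧
          C ≤ ‖
              (Pgen p x (fun t : Fin k => x ⟨t.1, t.2.trans_le hkn⟩) z -
               Pgen p y (fun t : Fin k => x ⟨t.1, t.2.trans_le hkn⟩) z)‖ := by
  have h1p : (0:ℝ) < 1 - p := by linarith
  refine ⟨(1 - p) ^ ⌈Real.pi * p / (1 - p)⌉₊, pow_pos h1p _, ?_⟩
  rintro n k hk hkn x y ⟨i, hik, hxy⟩
  set w : Fin k → Bool := fun t : Fin k => x ⟨t.1, t.2.trans_le hkn⟩ with hw
  set a : ℕ → ℝ := fun j => indAt x w j - indAt y w j with hadef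
  have ha : ∀ j, |a j| ≤ 1 := by
    intro j
    simp only [hadef, indAt]
    split <;> split <;> norm_num
  have hax : occAt x w 0 := by
    intro t ht
    simp only [hw]
    congr 1
    exact Fin.ext (by simp)
  have hay : ¬ occAt y w 0 := by
    intro hocc
    have h0i : 0 + i < n := by omega
    have h1 := hocc ⟨i, hik⟩ h0i
    have h2 : (⟨0 + i, h0i⟩ : Fin n) = ⟨i, hik.trans_le hkn⟩ := Fin.ext (by simp)
    rw [h2, hw] at h1
    exact hxy h1.symm
  have ha0 : a 0 = 1 := by simp [hadef, indAt, hax, hay]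
  obtain ⟨q, hq1, hq2⟩ := key_poly p hp0 hp1 (n - k + 1) (Nat.succ_pos _) a ha ha0
  have hcne : (1 : ℂ) - (p:ℂ) ≠ 0 := by
    rw [show (1:ℂ) - (p:ℂ) = ((1-p:ℝ):ℂ) by push_cast; ring]
    exact_mod_cast h1p.ne'
  refine ⟨(q - (p:ℂ)) / (1 - (p:ℂ)), ?_, ?_⟩
  · rw [norm_div]
    have habs1p : ‖1 - (p:ℂ)‖ = 1 - p := by
      rw [show (1 - (p:ℂ)) = ((1 - p : ℝ) : ℂ) by push_cast; ring, Complex.norm_real, Real.norm_eq_abs,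
        abs_of_pos h1p]
    rw [habs1p, div_le_one h1p]
    exact hq1
  · have hz : (p : ℂ) + (1 - (p:ℂ)) * ((q - (p:ℂ)) / (1 - (p:ℂ))) = q := by
      field_simp
      ring
    rw [Pgen, Pgen, ← Finset.sum_sub_distrib]
    have hsum : ∀ j ∈ Finset.range (n - k + 1),
        ((indAt x w j : ℝ) : ℂ) * ((p : ℂ) + (1 - (p:ℂ)) * ((q - (p:ℂ)) / (1 - (p:ℂ)))) ^ j
          - ((indAt y w j : ℝ) : ℂ) * ((p : ℂ) + (1 - (p:ℂ)) * ((q - (p:ℂ)) / (1 - (p:ℂ)))) ^ j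
        = ((a j : ℝ) : ℂ) * q ^ j := by
      intro j _
      rw [hz, hadef]
      push_cast
      ring
    rw [Finset.sum_congr rfl hsum]
    exact hq2
end
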